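/- arXiv:1202.3877 — 12 statements merged into one kernel-verified Lean document; each statement's English description precedes it below -/
import Mathlib

section
/- Let G be a finite group, A a cyclic subgroup of G containing the commutator subgroup G', and N a non-trivial p-subgroup of A for some prime p. Then the centralizer C_G(N) has a normal p-complement, i.e. a normal subgroup of order coprime to p whose index is a power of p. -/
open scoped commutatorElement

private lemma aux_sq_dvd (x : ℤ) (n : ℕ) : x ^ 2 ∣ (1 + x) ^ n - 1 - n * x := by
  induction n with
  | zero => simp
  | succ n ih =>
    obtain ⟨t, ht⟩ := ih
    have h1 : (1 + x) ^ n = 1 + n * x + x ^ 2 * t := by linarith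
    refine ⟨t + n + x * t, ?_⟩
    have : (1 + x) ^ (n + 1) = (1 + x) ^ n * (1 + x) := by ring
    rw [this, h1]
    push_cast
    ring

private lemma aux_pow_step (c : ℤ) (p k : ℕ) (hk : 1 ≤ k) (h : (p : ℤ) ^ k ∣ c - 1) :
    (p : ℤ) ^ (k + 1) ∣ c ^ p - 1 := by
  obtain ⟨d, hd⟩ := h
  obtain ⟨t, ht⟩ := aux_sq_dvd (c - 1) p
  have hc : c ^ p - 1 = (c - 1) ^ 2 * t + p * (c - 1) := by
    have : (1 + (c - 1)) ^ p = c ^ p := by ring_nf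
    linarith [ht, this]
  rw [hc]
  refine dvd_add (dvd_mul_of_dvd_left ?_ t) ?_
  · calc (p:ℤ)^(k+1) ∣ (p:ℤ)^(2*k) := pow_dvd_pow _ (by omega)
      _ ∣ (c-1)^2 := ⟨d^2, by rw [hd]; ring⟩
  · rw [hd]; exact ⟨d, by ring⟩

private lemma aux_pow_iter (c : ℤ) (p : ℕ) (h : (p : ℤ) ∣ c - 1) (j : ℕ) :
    (p : ℤ) ^ (j + 1) ∣ c ^ p ^ j - 1 := by
  induction j with
  | zero => simpa using h
  | succ j ih =>
    have := aux_pow_step (c ^ p ^ j) p (j + 1) (by omega) ih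
    rwa [← pow_mul, ← pow_succ] at this

/-- decomposition of an element into commuting p-part and p'-part, both powers of `g`. -/
private lemma aux_decomp {Γ : Type*} [Group Γ] [Finite Γ] {p : ℕ} (hp : p.Prime) (g : Γ) :
    ∃ g1 g2 : Γ, g = g1 * g2 ∧ g1 * g2 = g2 * g1 ∧ (∃ k, g1 ^ p ^ k = 1) ∧
      (orderOf g2).Coprime p ∧ (∃ i : ℤ, g1 = g ^ i) ∧ (∃ i : ℤ, g2 = g ^ i) := by
  set n := orderOf g with hn
  have hn0 : n ≠ 0 := (orderOf_pos g).ne'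
  set a := p ^ n.factorization p with ha
  set b := ordCompl[p] n with hb
  have hab : a * b = n := Nat.ordProj_mul_ordCompl_eq_self n p
  have hcop : Nat.Coprime a b := Nat.Coprime.pow_left _ ((Nat.coprime_ordCompl hp hn0))
  obtain ⟨s, t, hst⟩ := (Nat.isCoprime_iff_coprime.mpr hcop)
  refine ⟨g ^ ((b : ℤ) * t), g ^ ((a : ℤ) * s), ?_, ?_, ?_, ?_, ⟨_, rfl⟩, ⟨_, rfl⟩⟩
  · rw [← zpow_add]
    have h1 : (b : ℤ) * t + a * s = 1 := by linarith
    rw [h1, zpow_one]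
  · rw [← zpow_add, ← zpow_add, add_comm]

  · refine ⟨n.factorization p, ?_⟩
    rw [← zpow_natCast, ← zpow_mul, ← ha]
    have : (b : ℤ) * t * a = (n : ℤ) * t := by rw [← hab]; push_cast; ring
    rw [this, zpow_mul, zpow_natCast, hn, pow_orderOf_eq_one, one_zpow]
  · have : (g ^ ((a : ℤ) * s)) ^ b = 1 := by
      rw [← zpow_natCast, ← zpow_mul]
      have : (a : ℤ) * s * b = (n : ℤ) * s := by rw [← hab]; push_cast; ring
      rw [this, zpow_mul, zpow_natCast, hn, pow_orderOf_eq_one, one_zpow]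
    exact Nat.Coprime.coprime_dvd_left (orderOf_dvd_of_pow_eq_one this)
      (Nat.coprime_ordCompl hp hn0).symm



/-- Core: an element `g` of order coprime to `p`, normalizing the cyclic `p`-group `⟨q⟩`
and fixing a nontrivial element `q ^ t`, centralizes `q`. -/
private lemma aux_stepA {G : Type*} [Group G] [Finite G] {p e : ℕ} (hp : p.Prime)
    {q g : G} (hqe : orderOf q = p ^ e) {c t : ℤ}
    (hc : g * q * g⁻¹ = q ^ c) (hx1 : q ^ t ≠ 1)
    (hgx : g * q ^ t = q ^ t * g) (hord : (orderOf g).Coprime p) :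
    g * q = q * g := by
  have he : 1 ≤ e := by
    rcases Nat.eq_zero_or_pos e with h0 | h; swap; · exact h
    exfalso
    rw [h0, pow_zero, orderOf_eq_one_iff] at hqe
    exact hx1 (by rw [hqe, one_zpow])
  -- ¬ p^e ∣ t
  have hndvd : ¬ ((p : ℤ) ^ e ∣ t) := by
    intro hdvd
    apply hx1
    rw [← orderOf_dvd_iff_zpow_eq_one, hqe]
    exact_mod_cast hdvd
  -- p ∣ c - 1
  have hpc : (p : ℤ) ∣ c - 1 := by
    have h1 : q ^ (c * t) = q ^ t := by
      have : g * q ^ t * g⁻¹ = (g * q * g⁻¹) ^ t := by rw [conj_zpow]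
      rw [hc, ← zpow_mul] at this
      have h2 : g * q ^ t * g⁻¹ = q ^ t := by
        rw [hgx]; group
      rw [h2] at this; exact this.symm
    have h3 : q ^ (t * (c - 1)) = 1 := by
      rw [mul_comm c t] at h1
      rw [mul_sub, mul_one, zpow_sub, h1]
      group
    have h4 : (p : ℤ) ^ e ∣ t * (c - 1) := by
      rw [← orderOf_dvd_iff_zpow_eq_one, hqe] at h3
      exact_mod_cast h3
    by_contra hnd
    have hprime : Prime (p : ℤ) := Nat.prime_iff_prime_int.mp hp
    have hcop : IsCoprime ((p : ℤ)) (c - 1) :=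
      (Prime.coprime_iff_not_dvd hprime).mpr hnd
    exact hndvd ((hcop.pow_left).dvd_of_dvd_mul_right h4)
  -- iterated conjugation
  have hiter : ∀ j : ℕ, g ^ j * q * (g ^ j)⁻¹ = q ^ (c ^ j) := by
    intro j
    induction j with
    | zero => simp
    | succ j ih =>
      have : g ^ (j + 1) * q * (g ^ (j + 1))⁻¹ = g * (g ^ j * q * (g ^ j)⁻¹) * g⁻¹ := by
        rw [pow_succ']; group
      rw [this, ih, ← conj_zpow, hc, ← zpow_mul, pow_succ]
      rw [mul_comm (c ^ j) c]
  -- order of g kills the action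
  have hm : (p : ℤ) ^ e ∣ c ^ (orderOf g) - 1 := by
    have h5 := hiter (orderOf g)
    rw [pow_orderOf_eq_one] at h5
    simp only [one_mul, inv_one, mul_one] at h5
    have h6 : q ^ (c ^ (orderOf g) - 1) = 1 := by
      rw [zpow_sub, ← h5]; group
    rw [← orderOf_dvd_iff_zpow_eq_one, hqe] at h6
    exact_mod_cast h6
  -- number theory
  have hnt : (p : ℤ) ^ e ∣ c ^ (p ^ (e - 1)) - 1 := by
    have := aux_pow_iter c p hpc (e - 1)
    have hee : e - 1 + 1 = e := by omega
    rwa [hee] at this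
  -- pass to ZMod (p ^ e)
  haveI : NeZero (p ^ e) := ⟨pow_ne_zero e hp.pos.ne'⟩
  have hw1 : (c : ZMod (p ^ e)) ^ (p ^ (e - 1)) = 1 := by
    have h8 : ((c ^ (p ^ (e - 1)) - 1 : ℤ) : ZMod (p ^ e)) = 0 := by
      rw [ZMod.intCast_zmod_eq_zero_iff_dvd]
      exact_mod_cast hnt
    push_cast at h8
    rwa [sub_eq_zero] at h8
  have hw2 : (c : ZMod (p ^ e)) ^ (orderOf g) = 1 := by
    have h8 : ((c ^ (orderOf g) - 1 : ℤ) : ZMod (p ^ e)) = 0 := by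
      rw [ZMod.intCast_zmod_eq_zero_iff_dvd]
      exact_mod_cast hm
    push_cast at h8
    rwa [sub_eq_zero] at h8
  have hwone : (c : ZMod (p ^ e)) = 1 := by
    have hd1 : orderOf (c : ZMod (p ^ e)) ∣ p ^ (e - 1) := orderOf_dvd_of_pow_eq_one hw1
    have hd2 : orderOf (c : ZMod (p ^ e)) ∣ orderOf g := orderOf_dvd_of_pow_eq_one hw2
    have h9 : orderOf (c : ZMod (p ^ e)) = 1 := Nat.eq_one_of_dvd_coprimes
      (hord.symm.pow_left (e - 1)) hd1 hd2
    rwa [orderOf_eq_one_iff] at h9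
  -- conclude q ^ c = q
  have hdvd : (p : ℤ) ^ e ∣ c - 1 := by
    have h10 : ((c - 1 : ℤ) : ZMod (p ^ e)) = 0 := by
      push_cast
      rw [hwone, sub_self]
    rw [ZMod.intCast_zmod_eq_zero_iff_dvd] at h10
    exact_mod_cast h10
  have hq1 : q ^ (c - 1) = 1 := by
    rw [← orderOf_dvd_iff_zpow_eq_one, hqe]
    exact_mod_cast hdvd
  have hqc : q ^ c = q := by
    have : q ^ c = q ^ (c - 1) * q := by
      rw [← zpow_add_one, sub_add_cancel]
    rw [this, hq1, one_mul]
  rw [hqc] at hc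
  exact mul_inv_eq_iff_eq_mul.mp hc


/-- Lemma (pComplemento): Let `A` be a cyclic subgroup of a finite group `G` containing the
commutator subgroup `G'`, and let `N` be a non-trivial `p`-subgroup of `A`. Then the
centralizer `C_G(N)` has a normal `p`-complement. -/
theorem stmt0 {G : Type*} [Group G] [Finite G] (A N : Subgroup G)
    (hA : IsCyclic A) (hGA : commutator G ≤ A) (p : ℕ) (hp : p.Prime)
    (hNA : N ≤ A) (hNbot : N ≠ ⊥) (hNp : IsPGroup p N) :
    ∃ K : Subgroup (Subgroup.centralizer (N : Set G)), K.Normal ∧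
      (Nat.card K).Coprime p ∧ ∃ n : ℕ, K.index = p ^ n := by
  haveI : Fact p.Prime := ⟨hp⟩
  classical
  set C := Subgroup.centralizer (N : Set G) with hCdef
  -- 0. commutativity inside A
  obtain ⟨aGen, haGen⟩ := hA.exists_generator
  have hAcomm : ∀ x y : G, x ∈ A → y ∈ A → x * y = y * x := by
    intro x y hx hy
    obtain ⟨i, hi⟩ := Subgroup.mem_zpowers_iff.mp (haGen ⟨x, hx⟩)
    obtain ⟨j, hj⟩ := Subgroup.mem_zpowers_iff.mp (haGen ⟨y, hy⟩)
    have h1 : (⟨x, hx⟩ : A) * ⟨y, hy⟩ = ⟨y, hy⟩ * ⟨x, hx⟩ := by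
      rw [← hi, ← hj, ← zpow_add, ← zpow_add, add_comm]
    exact congrArg Subtype.val h1
  have hAC : A ≤ C := by
    intro a ha
    rw [hCdef, Subgroup.mem_centralizer_iff]
    intro n hn
    exact hAcomm n a (hNA hn) ha
  have hAnorm : A.Normal := by
    constructor
    intro a ha g
    have h1 : g * a * g⁻¹ * a⁻¹ ∈ A := hGA (by
      have := Subgroup.commutator_mem_commutator (Subgroup.mem_top g) (Subgroup.mem_top a)
      rwa [← commutator_def, commutatorElement_def] at this)
    have h2 : g * a * g⁻¹ = (g * a * g⁻¹ * a⁻¹) * a := by group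
    rw [h2]; exact A.mul_mem h1 ha
  -- 1. the p-primary part Q of A
  set Q : Subgroup G :=
    { carrier := {x | x ∈ A ∧ ∃ k, x ^ p ^ k = 1}
      one_mem' := ⟨A.one_mem, 0, one_pow _⟩
      mul_mem' := by
        rintro x y ⟨hxA, kx, hkx⟩ ⟨hyA, ky, hky⟩
        refine ⟨A.mul_mem hxA hyA, kx + ky, ?_⟩
        have hcomm : x * y = y * x := hAcomm x y hxA hyA
        have hx1 : x ^ p ^ (kx + ky) = 1 := by
          rw [pow_add, pow_mul, hkx, one_pow]
        have hy1 : y ^ p ^ (kx + ky) = 1 := by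
          rw [add_comm, pow_add, pow_mul, hky, one_pow]
        rw [(Commute.mul_pow hcomm _ : (x * y) ^ p ^ (kx + ky) = _), hx1, hy1, one_mul]
      inv_mem' := by
        rintro x ⟨hxA, k, hk⟩
        exact ⟨A.inv_mem hxA, k, by rw [inv_pow, hk, inv_one]⟩ } with hQdef
  have hQmem : ∀ x : G, x ∈ Q ↔ x ∈ A ∧ ∃ k, x ^ p ^ k = 1 := fun x => Iff.rfl
  have hQA : Q ≤ A := fun x hx => ((hQmem x).mp hx).1
  have hNQ : N ≤ Q := by
    intro n hn
    refine (hQmem n).mpr ⟨hNA hn, ?_⟩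
    obtain ⟨k, hk⟩ := hNp ⟨n, hn⟩
    exact ⟨k, by simpa [← Subgroup.coe_pow, Subtype.ext_iff] using hk⟩
  have hQnorm : Q.Normal := by
    constructor
    intro x hx g
    obtain ⟨hxA, k, hk⟩ := (hQmem x).mp hx
    refine (hQmem _).mpr ⟨hAnorm.conj_mem x hxA g, k, ?_⟩
    rw [conj_pow, hk, mul_one, mul_inv_cancel]
  -- 2. Q is cyclic: generator q
  haveI : IsCyclic A := hA
  haveI : IsCyclic (Q.subgroupOf A) := Subgroup.isCyclic _
  haveI hQcyc : IsCyclic Q :=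
    isCyclic_of_surjective (Subgroup.subgroupOfEquivOfLe hQA)
      (Subgroup.subgroupOfEquivOfLe hQA).surjective
  obtain ⟨⟨q, hqQ⟩, hqgen⟩ := hQcyc.exists_generator
  have hQq : ∀ x, x ∈ Q → ∃ i : ℤ, x = q ^ i := by
    intro x hx
    obtain ⟨i, hi⟩ := Subgroup.mem_zpowers_iff.mp (hqgen ⟨x, hx⟩)
    refine ⟨i, ?_⟩
    have := congrArg Subtype.val hi
    simpa [← Subgroup.coe_zpow] using this.symm
  obtain ⟨hqA', kq, hkq⟩ := (hQmem q).mp hqQ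
  obtain ⟨e, -, hqe⟩ := (Nat.dvd_prime_pow hp).mp (orderOf_dvd_of_pow_eq_one hkq)
  -- 3. Q inside the centralizer C
  have hQC : Q ≤ C := le_trans hQA hAC
  set QC : Subgroup C := Q.subgroupOf C with hQCdef
  haveI hQCnorm : QC.Normal := hQnorm.subgroupOf C
  have hQCmem : ∀ x : C, x ∈ QC ↔ (x : G) ∈ Q := fun x => Iff.rfl
  have hQCp : IsPGroup p QC := by
    intro y
    obtain ⟨-, k, hk⟩ := (hQmem ((y : C) : G)).mp ((hQCmem (y : C)).mp y.2)
    refine ⟨k, Subtype.ext (Subtype.ext ?_)⟩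
    push_cast
    exact hk
  -- nontrivial element of N
  obtain ⟨x₀s, hx₀ne⟩ := Subgroup.ne_bot_iff_exists_ne_one.mp hNbot
  have hx₀N : (x₀s : G) ∈ N := x₀s.2
  have hx₀1 : (x₀s : G) ≠ 1 := by
    intro h; exact hx₀ne (Subtype.ext h)
  obtain ⟨t₀, ht₀⟩ := hQq _ (hNQ hx₀N)
  -- Step A: p'-elements of C centralize QC
  have stepA' : ∀ g : C, (orderOf g).Coprime p → ∀ x : C, x ∈ QC → g * x = x * g := by
    intro g hg x hx
    have hqconj : ∃ c : ℤ, (g : G) * q * (g : G)⁻¹ = q ^ c := by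
      obtain ⟨c, hc⟩ := hQq _ (hQnorm.conj_mem q hqQ (g : G))
      exact ⟨c, hc⟩
    obtain ⟨c, hc⟩ := hqconj
    have hgx₀ : (g : G) * q ^ t₀ = q ^ t₀ * (g : G) := by
      rw [← ht₀]
      exact (g.2 _ hx₀N).symm
    have hordg : (orderOf (g : G)).Coprime p := by
      rwa [Subgroup.orderOf_coe]
    have hx₀q : q ^ t₀ ≠ 1 := by rw [← ht₀]; exact hx₀1
    have hgq : (g : G) * q = q * (g : G) := aux_stepA hp hqe hc hx₀q hgx₀ hordg
    obtain ⟨i, hi⟩ := hQq _ ((hQCmem x).mp hx)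
    have h2 : (g : G) * (x : G) = (x : G) * (g : G) := by
      rw [hi]
      exact Commute.zpow_right (hgq : Commute (g : G) q) i
    exact Subtype.ext h2
  -- 4. quotient by QC
  set mkQ : C →* C ⧸ QC := QuotientGroup.mk' QC with hmkQ
  have hmkQsurj : Function.Surjective mkQ := QuotientGroup.mk'_surjective QC
  -- images of elements of A have p'-order
  have hAbar : ∀ y : C, (y : G) ∈ A → (orderOf (mkQ y)).Coprime p := by
    intro y hy
    have hn0 : orderOf y ≠ 0 := (orderOf_pos y).ne'
    set m := ordCompl[p] (orderOf y) with hm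
    have hym : y ^ m ∈ QC := by
      refine (hQCmem _).mpr ((hQmem _).mpr ⟨?_, ?_⟩)
      · have : ((y ^ m : C) : G) = (y : G) ^ m := by push_cast; rfl
        rw [this]
        exact A.pow_mem hy m
      · refine ⟨(orderOf y).factorization p, ?_⟩
        have h1 : orderOf (y ^ m) = p ^ (orderOf y).factorization p := by
          rw [orderOf_pow' y (Nat.ordCompl_pos p hn0).ne', ← hm,
            Nat.gcd_eq_right (Nat.ordCompl_dvd (orderOf y) p), ← hm]
          exact Nat.div_div_self (Nat.ordProj_dvd _ _) hn0 ▸ rfl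
        have h2 := pow_orderOf_eq_one (y ^ m)
        rw [h1] at h2
        have : (((y ^ m) ^ p ^ (orderOf y).factorization p : C) : G) = 1 := by
          rw [h2]; rfl
        push_cast at this
        exact this
    have hmk1 : (mkQ y) ^ m = 1 := by
      rw [← map_pow]
      exact (QuotientGroup.eq_one_iff _).mpr hym
    exact Nat.Coprime.coprime_dvd_left (orderOf_dvd_of_pow_eq_one hmk1)
      (Nat.coprime_ordCompl hp hn0).symm
  -- every element of the commutator subgroup of the quotient has p'-order
  have hcommbar : ∀ z : C ⧸ QC, z ∈ commutator (C ⧸ QC) → (orderOf z).Coprime p := by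
    have h1 : commutator (C ⧸ QC) ≤ (A.subgroupOf C).map mkQ := by
      rw [commutator_def, Subgroup.commutator_le]
      intro g₁ _ g₂ _
      obtain ⟨y₁, rfl⟩ := hmkQsurj g₁
      obtain ⟨y₂, rfl⟩ := hmkQsurj g₂
      rw [← map_commutatorElement]
      refine Subgroup.mem_map_of_mem _ ?_
      show ((⁅y₁, y₂⁆ : C) : G) ∈ A
      have : ((⁅y₁, y₂⁆ : C) : G) = ⁅(y₁ : G), (y₂ : G)⁆ := map_commutatorElement C.subtype y₁ y₂
      rw [this]
      exact hGA (by
        have := Subgroup.commutator_mem_commutator (Subgroup.mem_top (y₁ : G))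
          (Subgroup.mem_top (y₂ : G))
        rwa [← commutator_def] at this)
    intro z hz
    obtain ⟨y, hyA, rfl⟩ := h1 hz
    exact hAbar y hyA
  -- 5. Burnside transfer in the quotient
  obtain ⟨P⟩ : Nonempty (Sylow p (C ⧸ QC)) := inferInstance
  have hPcent : Subgroup.normalizer (P : Set (C ⧸ QC)) ≤ Subgroup.centralizer (P : Set (C ⧸ QC)) := by
    intro g hg
    rw [Subgroup.mem_centralizer_iff]
    intro x hx
    have hconj : g * x * g⁻¹ ∈ (P : Subgroup (C ⧸ QC)) :=
      (Subgroup.mem_normalizer_iff.mp hg x).mp hx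
    have hu1 : g * x * g⁻¹ * x⁻¹ ∈ (P : Subgroup (C ⧸ QC)) :=
      mul_mem hconj (inv_mem hx)
    have hu2 : g * x * g⁻¹ * x⁻¹ ∈ commutator (C ⧸ QC) := by
      have := Subgroup.commutator_mem_commutator (Subgroup.mem_top g) (Subgroup.mem_top x)
      rwa [← commutator_def, commutatorElement_def] at this
    have hup : ∃ k, (g * x * g⁻¹ * x⁻¹) ^ p ^ k = 1 := by
      obtain ⟨k, hk⟩ := P.2 ⟨_, hu1⟩
      exact ⟨k, by simpa [Subtype.ext_iff] using hk⟩
    obtain ⟨k, hk⟩ := hup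
    have hd1 : orderOf (g * x * g⁻¹ * x⁻¹) ∣ p ^ k := orderOf_dvd_of_pow_eq_one hk
    have hcop := hcommbar _ hu2
    have hone : orderOf (g * x * g⁻¹ * x⁻¹) = 1 :=
      Nat.eq_one_of_dvd_coprimes (hcop.symm.pow_left k) hd1 dvd_rfl
    rw [orderOf_eq_one_iff] at hone
    have h3 : g * x * g⁻¹ = x := mul_inv_eq_one.mp hone
    calc x * g = (g * x * g⁻¹) * g := by rw [h3]
      _ = g * x := by group
  -- Burnside's normal p-complement theorem
  set Kbar : Subgroup (C ⧸ QC) := (MonoidHom.transferSylow P hPcent).ker with hKbar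
  haveI hKbarNormal : Kbar.Normal := MonoidHom.normal_ker _
  have hKbarComp : Subgroup.IsComplement' Kbar (P : Subgroup (C ⧸ QC)) :=
    MonoidHom.ker_transferSylow_isComplement' P hPcent
  have hKbarCard : (Nat.card Kbar).Coprime p := by
    have h1 : (P : Subgroup (C ⧸ QC)).index = Nat.card Kbar := hKbarComp.index_eq_card
    have h2 : ¬ p ∣ (P : Subgroup (C ⧸ QC)).index := P.not_dvd_index
    rw [h1] at h2
    exact (hp.coprime_iff_not_dvd.mpr h2).symm
  obtain ⟨nP, hnP⟩ : ∃ n, Nat.card (P : Subgroup (C ⧸ QC)) = p ^ n := P.2.exists_card_eq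
  have hKbarIndex : Kbar.index = p ^ nP := by
    rw [hKbarComp.symm.index_eq_card, hnP]
  -- membership in Kbar is equivalent to having p'-order
  have hKbarMem : ∀ z : C ⧸ QC, z ∈ Kbar ↔ (orderOf z).Coprime p := by
    intro z
    constructor
    · intro hz
      have h1 : orderOf z ∣ Nat.card Kbar := by
        have h0 := orderOf_dvd_natCard (⟨z, hz⟩ : Kbar)
        rw [← Subgroup.orderOf_coe] at h0
        exact h0
      exact hKbarCard.coprime_dvd_left h1
    · intro hz
      set w := QuotientGroup.mk' Kbar z with hw
      have h1 : orderOf w ∣ orderOf z := orderOf_map_dvd _ z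
      have h2 : orderOf w ∣ p ^ nP := by
        have := orderOf_dvd_natCard w
        rwa [← Subgroup.index_eq_card, hKbarIndex] at this
      have h3 : orderOf w = 1 := Nat.eq_one_of_dvd_coprimes
        ((hz.symm.pow_left nP).symm : (orderOf z).Coprime (p ^ nP)).symm h2 h1
      rw [orderOf_eq_one_iff] at h3
      exact (QuotientGroup.eq_one_iff z).mp h3
  -- 6. T = preimage of Kbar
  set T : Subgroup C := Kbar.comap mkQ with hT
  have hQT : QC ≤ T := by
    intro y hy
    show mkQ y ∈ Kbar
    have h1 : mkQ y = 1 := (QuotientGroup.eq_one_iff y).mpr hy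
    rw [h1]
    exact Kbar.one_mem
  -- all elements of T centralize QC
  have hTcent : ∀ g : C, g ∈ T → ∀ x : C, x ∈ QC → g * x = x * g := by
    intro g hg x hx
    obtain ⟨g1, g2, hgdec, hcomm12, ⟨k, hg1⟩, hg2, ⟨i1, hi1⟩, ⟨i2, hi2⟩⟩ := aux_decomp hp g
    -- g1 (the p-part) lies in QC
    have hg1T : g1 ∈ T := hi1 ▸ T.zpow_mem hg i1
    have hg1Q : g1 ∈ QC := by
      have hmk : mkQ g1 ∈ Kbar := hg1T
      have hd1 : orderOf (mkQ g1) ∣ p ^ k := by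
        apply orderOf_dvd_of_pow_eq_one
        rw [← map_pow, hg1, map_one]
      have hcop : (orderOf (mkQ g1)).Coprime p := (hKbarMem _).mp hmk
      have h1 : orderOf (mkQ g1) = 1 :=
        Nat.eq_one_of_dvd_coprimes (hcop.symm.pow_left k) hd1 dvd_rfl
      rw [orderOf_eq_one_iff] at h1
      exact (QuotientGroup.eq_one_iff g1).mp h1
    have hcomm1 : g1 * x = x * g1 := by
      obtain ⟨ia, hia⟩ := hQq _ ((hQCmem g1).mp hg1Q)
      obtain ⟨ib, hib⟩ := hQq _ ((hQCmem x).mp hx)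
      refine Subtype.ext ?_
      show (g1 : G) * (x : G) = (x : G) * (g1 : G)
      rw [hia, hib, ← zpow_add, ← zpow_add, add_comm]
    have hcomm2 : g2 * x = x * g2 := stepA' g2 hg2 x hx
    rw [hgdec, mul_assoc, hcomm2, ← mul_assoc, hcomm1, mul_assoc]
  -- 7. Schur-Zassenhaus inside T
  set QT : Subgroup T := QC.subgroupOf T with hQT2
  haveI hQTnorm : QT.Normal := by
    constructor
    intro y hy g
    have hy' : (y : C) ∈ QC := hy
    show ((g * y * g⁻¹ : T) : C) ∈ QC
    have hco : ((g * y * g⁻¹ : T) : C) = (g : C) * (y : C) * (g : C)⁻¹ := by push_cast; rfl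
    rw [hco, hTcent (g : C) g.2 (y : C) hy', mul_assoc, mul_inv_cancel, mul_one]
    exact hy'
  have hQTp : IsPGroup p QT := by
    intro y
    obtain ⟨-, k, hk⟩ := (hQmem (((y : T) : C) : G)).mp ((hQCmem ((y : T) : C)).mp y.2)
    refine ⟨k, Subtype.ext (Subtype.ext (Subtype.ext ?_))⟩
    push_cast
    exact hk
  obtain ⟨eT, heT⟩ : ∃ n, Nat.card QT = p ^ n := hQTp.exists_card_eq
  -- the index of QT in T equals the cardinality of Kbar
  have hphi : QT.index = Nat.card Kbar := by
    set φ : T →* C ⧸ QC := mkQ.comp T.subtype with hφ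
    have hker : φ.ker = QT := by
      ext y
      show mkQ (y : C) ∈ (⊥ : Subgroup _) ↔ (y : C) ∈ QC
      rw [Subgroup.mem_bot]
      exact QuotientGroup.eq_one_iff _
    have hrange : φ.range = Kbar := by
      rw [hφ, MonoidHom.range_comp, Subgroup.range_subtype]
      show Subgroup.map mkQ (Kbar.comap mkQ) = Kbar
      exact Subgroup.map_comap_eq_self_of_surjective hmkQsurj Kbar
    rw [Subgroup.index_eq_card, ← hker, ← hrange]
    exact Nat.card_congr (QuotientGroup.quotientKerEquivRange φ).toEquiv
  have hQTcop : (Nat.card QT).Coprime QT.index := by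
    rw [heT, hphi]
    exact (hKbarCard.symm.pow_left eT)
  obtain ⟨K', hK'⟩ := Subgroup.exists_right_complement'_of_coprime hQTcop
  have hK'card : Nat.card K' = Nat.card Kbar := by
    rw [← hphi, hK'.symm.index_eq_card]
  have hK'cop : (Nat.card K').Coprime p := by rw [hK'card]; exact hKbarCard
  -- 8. characterization: p'-elements of C are exactly the elements of K'
  have hchar : ∀ g : C, (orderOf g).Coprime p ↔ g ∈ K'.map T.subtype := by
    intro g
    constructor
    · -- a p'-element lies in K'
      intro hg
      have hgT : g ∈ T := by
        show mkQ g ∈ Kbar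
        refine (hKbarMem _).mpr ?_
        exact hg.coprime_dvd_left (orderOf_map_dvd mkQ g)
      set gT : T := ⟨g, hgT⟩ with hgT2
      obtain ⟨⟨⟨qe, hqe'⟩, ⟨ke, hke⟩⟩, hprod⟩ := (hK'.existsUnique gT).exists
      simp only at hprod
      -- qe commutes with ke
      have hqeke : qe * ke = ke * qe := by
        refine Subtype.ext ?_
        show (qe : C) * (ke : C) = (ke : C) * (qe : C)
        exact (hTcent (ke : C) ke.2 (qe : C) hqe').symm
      have hgprod : gT = qe * ke := hprod.symm
      set n := orderOf g with hn
      have hnT : orderOf gT = n := by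
        rw [hn, hgT2, ← Subgroup.orderOf_coe (⟨g, hgT⟩ : T)]
      have h1 : qe ^ n * ke ^ n = 1 := by
        rw [← Commute.mul_pow hqeke, ← hgprod, ← hnT, pow_orderOf_eq_one]
      have hqe1 : qe ^ n = 1 := by
        have hmem : qe ^ n ∈ QT ⊓ K' := by
          constructor
          · exact QT.pow_mem hqe' n
          · have : qe ^ n = (ke ^ n)⁻¹ := by
              rw [eq_inv_iff_mul_eq_one]; exact h1
            rw [this]
            exact K'.inv_mem (K'.pow_mem hke n)
        have := hK'.disjoint.le_bot hmem
        rwa [Subgroup.mem_bot] at this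
      have hqeone : qe = 1 := by
        obtain ⟨k, hk⟩ := hQTp ⟨qe, hqe'⟩
        have hk' : qe ^ p ^ k = 1 := by
          simpa [Subtype.ext_iff] using hk
        have hd1 : orderOf qe ∣ p ^ k := orderOf_dvd_of_pow_eq_one hk'
        have hd2 : orderOf qe ∣ n := orderOf_dvd_of_pow_eq_one hqe1
        have : orderOf qe = 1 := Nat.eq_one_of_dvd_coprimes
          ((hg.symm.pow_left k) : (p ^ k).Coprime n) hd1 hd2
        rwa [orderOf_eq_one_iff] at this
      have : gT = ke := by rw [hgprod, hqeone, one_mul]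
      exact ⟨ke, hke, by rw [← this]; rfl⟩
    · -- elements of K' are p'-elements
      rintro ⟨y, hy, rfl⟩
      have h1 : orderOf (T.subtype y) = orderOf y := Subgroup.orderOf_coe y
      rw [h1]
      have h2 : orderOf y ∣ Nat.card K' := by
        have h0 := orderOf_dvd_natCard (⟨y, hy⟩ : K')
        rw [← Subgroup.orderOf_coe] at h0
        exact h0
      exact hK'cop.coprime_dvd_left h2
  -- 9. the normal p-complement
  set Kf : Subgroup C :=
    { carrier := {g : C | (orderOf g).Coprime p}
      one_mem' := by simp [orderOf_one]
      mul_mem' := by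
        intro a b ha hb
        have haK := (hchar a).mp ha
        have hbK := (hchar b).mp hb
        exact (hchar (a * b)).mpr (mul_mem haK hbK)
      inv_mem' := by
        intro a ha
        show (orderOf a⁻¹).Coprime p
        rwa [orderOf_inv] } with hKf
  have hKfmem : ∀ g : C, g ∈ Kf ↔ (orderOf g).Coprime p := fun _ => Iff.rfl
  refine ⟨Kf, ?_, ?_, ?_⟩
  · constructor
    intro x hx g
    show (orderOf (g * x * g⁻¹)).Coprime p
    have h1 : g * x * g⁻¹ = (MulAut.conj g) x := rfl
    have h2 : orderOf ((MulAut.conj g) x) = orderOf x :=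
      orderOf_injective (MulAut.conj g).toMonoidHom (MulAut.conj g).injective x
    rw [h1, h2]
    exact hx
  · -- coprime cardinality
    by_contra hcon
    rw [Nat.coprime_comm, hp.coprime_iff_not_dvd, not_not] at hcon
    haveI : Fintype Kf := Fintype.ofFinite _
    obtain ⟨x, hx⟩ := exists_prime_orderOf_dvd_card (G := Kf) p (by
      rwa [← Nat.card_eq_fintype_card])
    have h2 : (orderOf (x : C)).Coprime p := (hKfmem _).mp x.2
    have h3 : orderOf (x : C) = p := by
      rw [Subgroup.orderOf_coe, hx]
    rw [h3] at h2
    exact hp.one_lt.ne' ((Nat.coprime_self p).mp h2)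
  · -- index is a power of p
    haveI hKfnorm : Kf.Normal := by
      constructor
      intro x hx g
      show (orderOf (g * x * g⁻¹)).Coprime p
      have h1 : g * x * g⁻¹ = (MulAut.conj g) x := rfl
      have h2 : orderOf ((MulAut.conj g) x) = orderOf x :=
        orderOf_injective (MulAut.conj g).toMonoidHom (MulAut.conj g).injective x
      rw [h1, h2]
      exact hx
    have hpg : IsPGroup p (C ⧸ Kf) := by
      intro z
      obtain ⟨g, rfl⟩ := QuotientGroup.mk'_surjective Kf z
      have hn0 : orderOf g ≠ 0 := (orderOf_pos g).ne'
      refine ⟨(orderOf g).factorization p, ?_⟩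
      rw [← map_pow]
      have hmem : g ^ p ^ (orderOf g).factorization p ∈ Kf := by
        refine (hKfmem _).mpr ?_
        have h1 : orderOf (g ^ p ^ (orderOf g).factorization p) = ordCompl[p] (orderOf g) := by
          rw [orderOf_pow' g (pow_ne_zero _ hp.pos.ne'), Nat.gcd_eq_right (Nat.ordProj_dvd _ _)]
        rw [h1]
        exact (Nat.coprime_ordCompl hp hn0).symm
      exact (QuotientGroup.eq_one_iff _).mpr hmem
    obtain ⟨nf, hnf⟩ := hpg.exists_card_eq
    exact ⟨nf, by rw [Subgroup.index_eq_card, hnf]⟩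
end

section
/- Let G be a finite group, A a cyclic subgroup containing G', and H a subgroup of G that contains a non-trivial normal subgroup of G and satisfies H ∩ Z(G) = 1. Then A ∩ H ≠ 1. -/
/-- Let `G` be a finite group, `A` a cyclic subgroup containing `G'`, and `H` a subgroup of `G`
containing a non-trivial normal subgroup of `G` with `H ∩ Z(G) = 1`. Then `A ∩ H ≠ 1`. -/
theorem stmt2 {G : Type*} [Group G] [Finite G] (A H : Subgroup G) (hA : IsCyclic A)
    (hGA : commutator G ≤ A) (U : Subgroup G) (hU : U.Normal) (hU1 : U ≠ ⊥) (hUH : U ≤ H)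
    (hHZ : H ⊓ Subgroup.center G = ⊥) : A ⊓ H ≠ ⊥ := by
  intro h
  apply hU1
  rw [Subgroup.eq_bot_iff_forall]
  intro u hu
  -- first show u is central
  have hcent : u ∈ Subgroup.center G := by
    rw [Subgroup.mem_center_iff]
    intro g
    open scoped commutatorElement in
    have hcom : ⁅u, g⁆ ∈ A ⊓ H := by
      constructor
      · exact hGA (Subgroup.commutator_mem_commutator (Subgroup.mem_top u) (Subgroup.mem_top g))
      · apply hUH
        have h1 : g * u⁻¹ * g⁻¹ ∈ U := hU.conj_mem _ (U.inv_mem hu) g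
        have : u * (g * u⁻¹ * g⁻¹) ∈ U := U.mul_mem hu h1
        simpa [commutatorElement_def, mul_assoc] using this
    rw [h, Subgroup.mem_bot] at hcom
    have := commutatorElement_eq_one_iff_commute.mp hcom
    exact this.symm
  have : u ∈ H ⊓ Subgroup.center G := ⟨hUH hu, hcent⟩
  rw [hHZ, Subgroup.mem_bot] at this
  exact this
end

section
/- Let G be a finite group, A a cyclic subgroup containing G', and N an abelian subgroup of G. Then a subgroup K of N contains no non-trivial normal subgroup of G if and only if A ∩ K = 1 and Z(G) ∩ K = 1. -/
open scoped commutatorElement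

/-- Let `G` be a finite group, `A` a cyclic subgroup containing `G'`, `N` an abelian subgroup
of `G` and `K ≤ N`. Then `K` contains no non-trivial normal subgroup of `G` if and only if
`A ∩ K = 1` and `Z(G) ∩ K = 1`. -/
theorem stmt3 {G : Type*} [Group G] [Finite G] (A N K : Subgroup G) (hA : IsCyclic A)
    (hGA : commutator G ≤ A) (hN : ∀ x ∈ N, ∀ y ∈ N, x * y = y * x) (hKN : K ≤ N) :
    (∀ U : Subgroup G, U.Normal → U ≤ K → U = ⊥) ↔
      A ⊓ K = ⊥ ∧ Subgroup.center G ⊓ K = ⊥ := by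
  constructor
  · intro h
    obtain ⟨a, ha⟩ := hA.exists_generator
    constructor
    · -- A ⊓ K is normal in G
      apply h _ ?_ inf_le_right
      constructor
      intro x hx g
      obtain ⟨hxA, hxK⟩ := hx
      -- g * a * g⁻¹ ∈ A
      have hb : g * (a : G) * g⁻¹ ∈ A := by
        have h1 : ⁅g, (a : G)⁆ ∈ commutator G := by
          rw [commutator_def]
          exact Subgroup.commutator_mem_commutator (Subgroup.mem_top g) (Subgroup.mem_top _)
        have h2 : g * (a : G) * g⁻¹ = ⁅g, (a : G)⁆ * a := by
          rw [commutatorElement_def]; group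
        rw [h2]
        exact A.mul_mem (hGA h1) a.2
      obtain ⟨m, hm⟩ := ha ⟨x, hxA⟩
      obtain ⟨r, hr⟩ := ha ⟨g * (a : G) * g⁻¹, hb⟩
      have hmG : (a : G) ^ m = x := by
        have := congrArg (Subgroup.subtype A) hm
        simpa using this
      have hrG : (a : G) ^ r = g * (a : G) * g⁻¹ := by
        have := congrArg (Subgroup.subtype A) hr
        simpa using this
      have key : g * x * g⁻¹ = x ^ r := by
        rw [← hmG, ← conj_zpow, ← hrG, ← zpow_mul, ← zpow_mul, mul_comm]
      rw [key]
      exact ⟨A.zpow_mem hxA r, K.zpow_mem hxK r⟩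
    · -- Z(G) ⊓ K is normal in G
      apply h _ ?_ inf_le_right
      constructor
      intro x hx g
      obtain ⟨hxZ, hxK⟩ := hx
      have hz := Subgroup.mem_center_iff.mp hxZ g
      have : g * x * g⁻¹ = x := by rw [hz]; group
      rw [this]
      exact ⟨hxZ, hxK⟩
  · rintro ⟨hAK, hZK⟩ U hUn hUK
    rw [eq_bot_iff]
    intro u hu
    -- first, u is central
    have hcent : u ∈ Subgroup.center G := by
      rw [Subgroup.mem_center_iff]
      intro g
      have hc : ⁅g, u⁆ ∈ A ⊓ K := by
        constructor
        · apply hGA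
          rw [commutator_def]
          exact Subgroup.commutator_mem_commutator (Subgroup.mem_top g) (Subgroup.mem_top u)
        · apply hUK
          have h1 : g * u * g⁻¹ ∈ U := hUn.conj_mem u hu g
          have h2 : ⁅g, u⁆ = (g * u * g⁻¹) * u⁻¹ := by rw [commutatorElement_def]
          rw [h2]
          exact U.mul_mem h1 (U.inv_mem hu)
      rw [hAK] at hc
      have h3 : g * u * g⁻¹ * u⁻¹ = 1 := by
        have := Subgroup.mem_bot.mp hc
        rwa [commutatorElement_def] at this
      calc g * u = (g * u * g⁻¹ * u⁻¹) * (u * g) := by group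
        _ = u * g := by rw [h3, one_mul]
    have : u ∈ Subgroup.center G ⊓ K := ⟨hcent, hUK hu⟩
    rw [hZK] at this
    exact this
end

section
/- Let G be a finite group with G' contained in a cyclic subgroup A, let C = C_G(A), and let x ∈ C with (x, c) ≠ 1 for some c ∈ C. Set N = ⟨(x, c)⟩. Then the conjugacy class of x in G satisfies N·x^G = x^G, i.e. for every n ∈ N and g ∈ G, n·x^g is conjugate to x in G. -/
/-- Let `G` be finite with `G'` contained in a cyclic subgroup `A`, `C = C_G(A)`, and
`x ∈ C` with `(x, c) ≠ 1` for some `c ∈ C`. With `N = ⟨(x, c)⟩` one has `N·x^G = x^G`: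
for every `n ∈ N` and `g ∈ G`, `n·x^g` is conjugate to `x` in `G`. -/
theorem stmt5 {G : Type*} [Group G] [Finite G] (A : Subgroup G) (hA : IsCyclic A)
    (hGA : commutator G ≤ A) (x c : G)
    (hx : x ∈ Subgroup.centralizer (A : Set G))
    (hc : c ∈ Subgroup.centralizer (A : Set G))
    (hxc : x⁻¹ * c⁻¹ * x * c ≠ 1) :
    ∀ n ∈ Subgroup.zpowers (x⁻¹ * c⁻¹ * x * c), ∀ g : G, IsConj x (n * (g⁻¹ * x * g)) := by
  intro n hn g
  obtain ⟨m, hm⟩ := Subgroup.mem_zpowers_iff.mp hn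
  subst hm
  set w : G := x⁻¹ * c⁻¹ * x * c with hwdef
  open scoped commutatorElement in
  have hwA : w ∈ A := by
    have h1 : (⁅x⁻¹, c⁻¹⁆ : G) ∈ commutator G :=
      Subgroup.commutator_mem_commutator (Subgroup.mem_top _) (Subgroup.mem_top _)
    have h2 : (⁅x⁻¹, c⁻¹⁆ : G) = w := by rw [commutatorElement_def, hwdef]; group
    exact hGA (h2 ▸ h1)
  set a : G := x⁻¹ * (g⁻¹ * x * g) with hadef
  open scoped commutatorElement in
  have haA : a ∈ A := by
    have h1 : (⁅x⁻¹, g⁻¹⁆ : G) ∈ commutator G :=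
      Subgroup.commutator_mem_commutator (Subgroup.mem_top _) (Subgroup.mem_top _)
    have h2 : (⁅x⁻¹, g⁻¹⁆ : G) = a := by rw [commutatorElement_def, hadef]; group
    exact hGA (h2 ▸ h1)
  have hcw : Commute c w := (hc w hwA).symm
  have hxw : Commute x w := (hx w hwA).symm
  have hca : Commute c a := (hc a haA).symm
  have hcxc : c⁻¹ * x * c = x * w := by rw [hwdef]; group
  -- the inverse conjugation relation
  have h' : x = c * (x * w) * c⁻¹ := by rw [← hcxc]; group
  have h2 : c * x * c⁻¹ * w = x := by
    conv_rhs => rw [h']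
    calc c * x * c⁻¹ * w = c * x * (c⁻¹ * w) := by group
      _ = c * x * (w * c⁻¹) := by rw [hcw.inv_left.eq]
      _ = c * (x * w) * c⁻¹ := by group
  have hcxci : c * x * c⁻¹ = x * w⁻¹ := by
    conv_rhs => rw [← h2]
    group
  have key : ∀ k : ℤ, c ^ (-k) * x * c ^ k = x * w ^ k := by
    intro k
    induction k using Int.induction_on with
    | zero => simp
    | succ k ih =>
        have e1 : c ^ (-((k : ℤ) + 1)) * x * c ^ ((k : ℤ) + 1)
            = c⁻¹ * (c ^ (-(k : ℤ)) * x * c ^ (k : ℤ)) * c := by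
          rw [neg_add, zpow_add, zpow_add, zpow_one, zpow_neg_one]; group
        calc c ^ (-((k : ℤ) + 1)) * x * c ^ ((k : ℤ) + 1)
            = c⁻¹ * (x * w ^ (k : ℤ)) * c := by rw [e1, ih]
          _ = c⁻¹ * x * (w ^ (k : ℤ) * c) := by group
          _ = c⁻¹ * x * (c * w ^ (k : ℤ)) := by rw [← (hcw.zpow_right (k : ℤ)).eq]
          _ = (c⁻¹ * x * c) * w ^ (k : ℤ) := by group
          _ = x * w * w ^ (k : ℤ) := by rw [hcxc]
          _ = x * (w * w ^ (k : ℤ)) := by group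
          _ = x * (w ^ (k : ℤ) * w) := by rw [(Commute.self_zpow w (k : ℤ)).eq]
          _ = x * w ^ ((k : ℤ) + 1) := by rw [zpow_add_one]
    | pred k ih =>
        have e1 : c ^ (-(-(k : ℤ) - 1)) * x * c ^ (-(k : ℤ) - 1)
            = c * (c ^ (-(-(k : ℤ))) * x * c ^ (-(k : ℤ))) * c⁻¹ := by
          rw [show (-(-(k : ℤ) - 1)) = 1 + -(-(k : ℤ)) by ring,
            show (-(k : ℤ) - 1) = -(k : ℤ) + -1 by ring, zpow_add, zpow_add, zpow_one,
            zpow_neg_one]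
          group
        calc c ^ (-(-(k : ℤ) - 1)) * x * c ^ (-(k : ℤ) - 1)
            = c * (x * w ^ (-(k : ℤ))) * c⁻¹ := by rw [e1, ih]
          _ = c * x * (w ^ (-(k : ℤ)) * c⁻¹) := by group
          _ = c * x * (c⁻¹ * w ^ (-(k : ℤ))) := by
              rw [← ((hcw.zpow_right (-(k : ℤ))).inv_left).eq]
          _ = (c * x * c⁻¹) * w ^ (-(k : ℤ)) := by group
          _ = x * w⁻¹ * w ^ (-(k : ℤ)) := by rw [hcxci]
          _ = x * (w⁻¹ * w ^ (-(k : ℤ))) := by group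
          _ = x * w ^ (-(k : ℤ) - 1) := by
              rw [show (-(k : ℤ) - 1) = -1 + -(k : ℤ) by ring, zpow_add, zpow_neg_one]
  rw [isConj_iff]
  refine ⟨c ^ (-m) * g⁻¹, ?_⟩
  calc (c ^ (-m) * g⁻¹) * x * (c ^ (-m) * g⁻¹)⁻¹
      = c ^ (-m) * (x * a) * c ^ m := by rw [hadef]; group
    _ = c ^ (-m) * x * (a * c ^ m) := by group
    _ = c ^ (-m) * x * (c ^ m * a) := by rw [← (hca.zpow_left m).eq]
    _ = (c ^ (-m) * x * c ^ m) * a := by group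
    _ = x * w ^ m * a := by rw [key m]
    _ = w ^ m * x * a := by rw [(hxw.zpow_right m).eq]
    _ = w ^ m * (x * a) := by group
    _ = w ^ m * (g⁻¹ * x * g) := by rw [hadef]; group
end

section
/- Let G be a finite group, N a normal subgroup, u ∈ RG, and x ∈ G such that N·x^G = x^G. Then ε_x^G(u) = ε_{xN}^{G/N}(ω_N(u)), where ω_N : RG → R(G/N) is induced by the quotient map. -/
open scoped Classical

/-- If `N ⊴ G`, `u ∈ RG` and `x ∈ G` with `N·x^G = x^G`, then
`ε_x^G(u) = ε_{xN}^{G/N}(ω_N(u))`. -/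
theorem stmt8 {R : Type*} [CommRing R] {G : Type*} [Group G] [Fintype G]
    (N : Subgroup G) [N.Normal] (u : MonoidAlgebra R G) (x : G)
    (hx : ∀ n ∈ N, ∀ y : G, IsConj x y → IsConj x (n * y)) :
    (∑ h : G, if IsConj x h then u.coeff h else 0)
      = ∑ q : G ⧸ N, if IsConj (QuotientGroup.mk x : G ⧸ N) q
          then (MonoidAlgebra.mapDomainRingHom R (QuotientGroup.mk' N) u).coeff q else 0 := by
  have key : ∀ h : G, IsConj x h ↔
      IsConj (QuotientGroup.mk x : G ⧸ N) (QuotientGroup.mk h) := by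
    intro h
    constructor
    · intro hc
      obtain ⟨c, hc⟩ := isConj_iff.mp hc
      exact isConj_iff.mpr ⟨QuotientGroup.mk c, by rw [← hc]; simp⟩
    · intro hc
      obtain ⟨c, hc⟩ := isConj_iff.mp hc
      obtain ⟨d, rfl⟩ := QuotientGroup.mk_surjective c
      have : (QuotientGroup.mk (d * x * d⁻¹) : G ⧸ N) = QuotientGroup.mk h := by
        simpa using hc
      rw [QuotientGroup.eq] at this
      set y := d * x * d⁻¹ with hy
      set n := y⁻¹ * h with hn
      have hnN : n ∈ N := this
      have hh : h = y * n * y⁻¹ * y := by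
        simp [hn, mul_assoc]
      have hn'N : y * n * y⁻¹ ∈ N := Subgroup.Normal.conj_mem ‹N.Normal› n hnN y
      rw [hh]
      exact hx _ hn'N y (isConj_iff.mpr ⟨d, rfl⟩)
  have hmap : ∀ q : G ⧸ N,
      (MonoidAlgebra.mapDomainRingHom R (QuotientGroup.mk' N) u).coeff q
        = ∑ h : G, if (QuotientGroup.mk h : G ⧸ N) = q then u.coeff h else 0 := by
    intro q
    classical
    show (Finsupp.mapDomain (QuotientGroup.mk' N) u.coeff) q = _
    rw [Finsupp.mapDomain, Finsupp.sum_apply, Finsupp.sum]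
    rw [Finset.sum_subset (Finset.subset_univ u.coeff.support)]
    · exact Finset.sum_congr rfl fun h _ => by simp [Finsupp.single_apply]
    · intro h _ hh
      simp [Finsupp.notMem_support_iff.mp hh]
  calc (∑ h : G, if IsConj x h then u.coeff h else 0)
      = ∑ h : G, if IsConj (QuotientGroup.mk x : G ⧸ N) (QuotientGroup.mk h)
          then u.coeff h else 0 := by
        exact Finset.sum_congr rfl fun h _ => by rw [if_congr (key h) rfl rfl]
    _ = ∑ h : G, ∑ q : G ⧸ N, if IsConj (QuotientGroup.mk x : G ⧸ N) q
          then (if (QuotientGroup.mk h : G ⧸ N) = q then u.coeff h else 0) else 0 := by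
        refine Finset.sum_congr rfl fun h _ => ?_
        have h1 := Finset.sum_ite_eq (Finset.univ : Finset (G ⧸ N)) (QuotientGroup.mk h : G ⧸ N)
          (fun q => if IsConj (QuotientGroup.mk x : G ⧸ N) q then u.coeff h else 0)
        simp only [Finset.mem_univ, if_true] at h1
        rw [← h1]
        exact Finset.sum_congr rfl fun q _ => by by_cases h2 : IsConj (QuotientGroup.mk x : G ⧸ N) q <;>
          by_cases h3 : (QuotientGroup.mk h : G ⧸ N) = q <;> simp [h2, h3]
    _ = ∑ q : G ⧸ N, if IsConj (QuotientGroup.mk x : G ⧸ N) q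
          then (MonoidAlgebra.mapDomainRingHom R (QuotientGroup.mk' N) u).coeff q else 0 := by
        rw [Finset.sum_comm]
        refine Finset.sum_congr rfl fun q _ => ?_
        rw [hmap q]
        split <;> simp
end

section
/- Let N = C × H be a finite abelian group with C cyclic, and let K ≤ N be a subgroup with N/K cyclic and K ∩ (C × 1) = 1. Then |K| = |N| / exp(N) = |H|, and the projection of N onto H restricts to an isomorphism from K onto H; in particular K = {f(h)·h : h ∈ H} for a unique homomorphism f : H → C. -/
/-- Let `N = C × H` be a finite abelian group with `C` cyclic of order `exp(N)`, and let
`K ≤ N` with `N/K` cyclic and `K ∩ (C × 1) = 1`. Then `|K| = |N|/exp(N) = |H|`, the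
projection onto `H` restricts to an isomorphism `K ≅ H`, and `K = {(f h, h) : h ∈ H}` for a
unique homomorphism `f : H → C`. -/
theorem stmt10 {C H : Type*} [CommGroup C] [CommGroup H] [Finite C] [Finite H]
    (hC : IsCyclic C) (hCexp : Nat.card C = Monoid.exponent (C × H))
    (K : Subgroup (C × H)) (hq : IsCyclic ((C × H) ⧸ K))
    (hK : K ⊓ (Subgroup.prod ⊤ ⊥) = ⊥) :
    Nat.card K = Nat.card (C × H) / Monoid.exponent (C × H) ∧
    Nat.card K = Nat.card H ∧
    (∃ e : K ≃* H, ∀ k : K, e k = (k : C × H).2) ∧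
    (∃! f : H →* C, ∀ x : C × H, x ∈ K ↔ x.1 = f x.2) := by
  -- projection to H restricted to K
  set φ : K →* H := (MonoidHom.snd C H).comp K.subtype with hφ
  have hinj : Function.Injective φ := by
    rw [injective_iff_map_eq_one]
    intro k hk
    have hmem : (k : C × H) ∈ K ⊓ Subgroup.prod ⊤ ⊥ := by
      refine ⟨k.2, Subgroup.mem_prod.2 ⟨trivial, ?_⟩⟩
      simpa [hφ] using hk
    rw [hK] at hmem
    exact Subtype.ext hmem
  have hCpos : 0 < Nat.card C := Nat.card_pos
  have hcard : Nat.card ((C × H) ⧸ K) * Nat.card K = Nat.card (C × H) :=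
    (Subgroup.card_eq_card_quotient_mul_card_subgroup K).symm
  have hQ : Nat.card ((C × H) ⧸ K) ≤ Nat.card C := by
    haveI := hq
    rw [hCexp, ← IsCyclic.exponent_eq_card]
    exact Nat.le_of_dvd (hCexp ▸ hCpos)
      (MonoidHom.exponent_dvd (f := QuotientGroup.mk' K) (QuotientGroup.mk'_surjective K))
  have hle : Nat.card K ≤ Nat.card H := Nat.card_le_card_of_injective φ hinj
  have hge : Nat.card H ≤ Nat.card K := by
    have := hcard
    rw [Nat.card_prod] at this
    nlinarith [Nat.card_pos (α := K), Nat.card_pos (α := ((C × H) ⧸ K))]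
  have hKH : Nat.card K = Nat.card H := le_antisymm hle hge
  have hbij : Function.Bijective φ :=
    (Nat.bijective_iff_injective_and_card φ).2 ⟨hinj, hKH⟩
  set e : K ≃* H := MulEquiv.ofBijective φ hbij with he
  have heapp : ∀ k : K, e k = (k : C × H).2 := fun k => rfl
  set f : H →* C := (MonoidHom.fst C H).comp (K.subtype.comp e.symm.toMonoidHom) with hf
  have hfK : ∀ x : C × H, x ∈ K ↔ x.1 = f x.2 := by
    intro x
    constructor
    · intro hx
      have : e.symm x.2 = ⟨x, hx⟩ := by
        apply e.injective; rw [e.apply_symm_apply]; exact (heapp ⟨x, hx⟩).symm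
      simp [hf, this]
    · intro hx
      have h2 : ((e.symm x.2 : K) : C × H).2 = x.2 := by
        have := heapp (e.symm x.2)
        rw [e.apply_symm_apply] at this; exact this.symm
      have h1 : ((e.symm x.2 : K) : C × H).1 = f x.2 := rfl
      have : ((e.symm x.2 : K) : C × H) = x := by
        ext <;> simp [h1, h2, hx]
      rw [← this]; exact (e.symm x.2).2
  refine ⟨?_, hKH, ⟨e, heapp⟩, ⟨f, hfK, ?_⟩⟩
  · rw [← hCexp, Nat.card_prod, Nat.mul_div_cancel_left _ hCpos, hKH]
  · intro g hg
    ext h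
    have : (g h, h) ∈ K := (hg (g h, h)).2 rfl
    exact ((hfK (g h, h)).1 this)
end

section
/- Let G be a finite group, A a cyclic subgroup containing G', and N an abelian subgroup of G containing A. Let 𝕂 be the set of subgroups K of N such that N/K is cyclic and K contains no non-trivial normal subgroup of G. Then for every K ∈ 𝕂, one has |𝕂| ≤ |K| = |N| / exp(N). -/
open scoped commutatorElement IsMulCommutative

private lemma normal_of_commutator_le {G : Type*} [Group G] {H : Subgroup G}
    (h : commutator G ≤ H) : H.Normal := by
  constructor
  intro x hx g
  have hc : ⁅g, x⁆ ∈ commutator G := by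
    rw [_root_.commutator_def]
    exact Subgroup.commutator_mem_commutator (Subgroup.mem_top g) (Subgroup.mem_top x)
  have := mul_mem (h hc) hx
  rwa [commutatorElement_def, inv_mul_cancel_right] at this

private lemma cyclic_hom_pow {H : Type*} [Group H] (hc : IsCyclic H) (σ : H →* H) :
    ∃ k : ℤ, ∀ y, σ y = y ^ k := by
  obtain ⟨g, hg⟩ := hc.exists_generator
  obtain ⟨k, hk⟩ := Subgroup.mem_zpowers_iff.mp (hg (σ g))
  refine ⟨k, fun y => ?_⟩
  obtain ⟨j, hj⟩ := Subgroup.mem_zpowers_iff.mp (hg y)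
  rw [← hj, map_zpow, ← hk, ← zpow_mul, mul_comm, zpow_mul]

private lemma coprime_orderOf_pow {H : Type*} [Group H] [Finite H] (x : H) {a n : ℕ}
    (hd : orderOf x ∣ n) (hn : n ≠ 0) : Nat.Coprime (orderOf (x ^ a ^ n)) a := by
  rcases Nat.eq_zero_or_pos a with rfl | ha
  · rw [zero_pow hn, pow_zero, orderOf_one]
    exact Nat.coprime_one_left _
  have hd0 : orderOf x ≠ 0 := (orderOf_pos x).ne'
  have hnpos : 0 < n := Nat.pos_of_ne_zero hn
  rw [orderOf_pow' x (pow_ne_zero n ha.ne'), Nat.coprime_comm]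
  by_contra hcon
  obtain ⟨p, hp, hpa, hpm⟩ := Nat.Prime.not_coprime_iff_dvd.mp hcon
  set d := orderOf x with hdd
  set v := d.factorization p with hv
  have h1 : p ^ v ∣ d := Nat.ordProj_dvd d p
  have hvn : v ≤ n :=
    le_of_lt (lt_of_lt_of_le (Nat.lt_pow_self (n := v) hp.one_lt)
      (Nat.le_of_dvd hnpos (h1.trans hd)))
  have h2 : p ^ v ∣ a ^ n := dvd_trans (pow_dvd_pow p hvn) (pow_dvd_pow_of_dvd hpa n)
  have h3 : p ^ v ∣ d.gcd (a ^ n) := Nat.dvd_gcd h1 h2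
  obtain ⟨k, hk⟩ := Nat.gcd_dvd_left d (a ^ n)
  have hne : 0 < d.gcd (a ^ n) := Nat.pos_of_ne_zero (fun h => hd0 (by rw [hk, h, zero_mul]))
  have hquot : d / d.gcd (a ^ n) = k := Nat.div_eq_of_eq_mul_right hne hk
  obtain ⟨w, hw⟩ := h3
  have hww : d / p ^ v = w * k :=
    Nat.div_eq_of_eq_mul_right (pow_pos hp.pos v) (by rw [hk, hw, mul_assoc])
  have : p ∣ d / p ^ v := by
    rw [hww]; exact Dvd.dvd.mul_left (hquot ▸ hpm) w
  exact Nat.not_dvd_ordCompl hp hd0 this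

private lemma exists_pow_eq {H : Type*} [Group H] [Finite H] (x : H) {t : ℕ}
    (h : Nat.Coprime t (orderOf x)) : ∃ y : H, y ^ t = x := by
  rcases le_or_gt (orderOf x) 1 with h1 | h1
  · interval_cases hh : orderOf x
    · exact absurd hh (orderOf_pos x).ne'
    · exact ⟨1, by rw [one_pow, ← orderOf_eq_one_iff.mp hh]⟩
  obtain ⟨m, -, hm⟩ := Nat.exists_mul_mod_eq_one_of_coprime h h1
  refine ⟨x ^ m, ?_⟩
  rw [← pow_mul, mul_comm m t, ← pow_mod_orderOf, hm, pow_one]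

private lemma totient_aux : ∀ s b : ℕ, 0 < b → (∀ p, p.Prime → p ∣ s → p ∣ b) →
    (b * s).totient = s * b.totient := by
  intro s
  induction s using Nat.strong_induction_on with
  | _ s ih =>
    intro b hb hp
    match s, hp, ih with
    | 0, hp, ih => simp
    | 1, hp, ih => simp
    | (s+2), hp, ih =>
      set t := s + 2 with ht
      have ht1 : t ≠ 1 := by omega
      set q := t.minFac with hqd
      have hq : q.Prime := Nat.minFac_prime ht1
      have hqb : q ∣ b := hp _ hq (Nat.minFac_dvd t)
      obtain ⟨s', hs'⟩ := Nat.minFac_dvd t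
      rw [← hqd] at hs'
      have h2 : 2 ≤ q := hq.two_le
      clear_value q
      have hs'pos : 0 < s' := by
        rcases Nat.eq_zero_or_pos s' with rfl | h
        · omega
        · exact h
      have hs'lt : s' < t := by
        have h3 : 2 * s' ≤ t := hs' ▸ Nat.mul_le_mul_right s' h2
        omega
      calc (b * t).totient = (q * (b * s')).totient := by
            rw [hs']; congr 1; ring
        _ = q * (b * s').totient :=
            Nat.totient_mul_of_prime_of_dvd hq (dvd_mul_of_dvd_left hqb s')
        _ = q * (s' * b.totient) := by
            rw [ih s' hs'lt b hb
              (fun p pp hd => hp p pp (hs' ▸ dvd_mul_of_dvd_right hd _))]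
        _ = t * b.totient := by rw [hs']; ring





private lemma card_hom_eq (M : Type*) [CommGroup M] [Finite M] :
    Nat.card (M →* ℂˣ) = Nat.card M := by
  have : NeZero (Monoid.exponent M) := ⟨Monoid.exponent_ne_zero_of_finite⟩
  obtain ⟨e⟩ := CommGroup.monoidHom_mulEquiv_of_hasEnoughRootsOfUnity M ℂ
  exact Nat.card_congr e.toEquiv

private lemma finite_hom (M : Type*) [CommGroup M] [Finite M] : Finite (M →* ℂˣ) := by
  have : NeZero (Monoid.exponent M) := ⟨Monoid.exponent_ne_zero_of_finite⟩
  obtain ⟨e⟩ := CommGroup.monoidHom_mulEquiv_of_hasEnoughRootsOfUnity M ℂ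
  exact Finite.of_equiv M e.symm.toEquiv

private lemma card_orderOf_subtype {H : Type*} [Group H] [Finite H] [IsCyclic H] {d : ℕ}
    (hd : d ∣ Nat.card H) : Nat.card {x : H // orderOf x = d} = d.totient := by
  classical
  cases nonempty_fintype H
  rw [Nat.card_eq_fintype_card, Fintype.card_subtype]
  exact IsCyclic.card_orderOf_eq_totient (by rwa [← Nat.card_eq_fintype_card])

private lemma aux_count {α β : Type*} [Finite α] (f : α → β) (s : Set β) (c : ℕ)
    (h : ∀ b ∈ s, c ≤ Nat.card {a : α // f a = b}) : Nat.card s * c ≤ Nat.card α := by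
  classical
  rcases Nat.eq_zero_or_pos c with rfl | hc
  · simp
  have hsub : s ⊆ Set.range f := by
    intro b hb
    have h1 : 0 < Nat.card {a : α // f a = b} := lt_of_lt_of_le hc (h b hb)
    obtain ⟨⟨a, ha⟩⟩ := (Nat.card_pos_iff.mp h1).1
    exact ⟨a, ha⟩
  have hfin : s.Finite := (Set.finite_range f).subset hsub
  haveI := hfin.fintype
  haveI := Fintype.ofFinite α
  have hinj : Function.Injective
      (fun x : (Σ b : s, {a : α // f a = b.1}) => x.2.1) := by
    rintro ⟨⟨b₁, hb₁⟩, ⟨a₁, ha₁⟩⟩ ⟨⟨b₂, hb₂⟩, ⟨a₂, ha₂⟩⟩ hh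
    simp only at hh
    subst hh
    obtain rfl : b₁ = b₂ := ha₁.symm.trans ha₂
    rfl
  have hle : Nat.card (Σ b : s, {a : α // f a = b.1}) ≤ Nat.card α :=
    Nat.card_le_card_of_injective _ hinj
  calc Nat.card s * c = ∑ _b : s, c := by
        rw [Finset.sum_const, smul_eq_mul, Nat.card_eq_fintype_card]
        rfl
    _ ≤ ∑ b : s, Nat.card {a : α // f a = b.1} :=
        Finset.sum_le_sum (fun b _ => h b.1 b.2)
    _ = Nat.card (Σ b : s, {a : α // f a = b.1}) := by
        rw [Nat.card_eq_fintype_card, Fintype.card_sigma]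
        simp [Nat.card_eq_fintype_card]
    _ ≤ Nat.card α := hle

private lemma hom_injective_of_orderOf {Q M : Type*} [Group Q] [Finite Q] [CommGroup M]
    (q : Q) (hq : ∀ y, y ∈ Subgroup.zpowers q) (ψ : Q →* M)
    (hψ : orderOf ψ = Nat.card Q) : Function.Injective ψ := by
  have hq' : orderOf q = Nat.card Q := orderOf_eq_card_of_forall_mem_zpowers hq
  have h2 : orderOf ψ ∣ orderOf (ψ q) := by
    apply orderOf_dvd_of_pow_eq_one
    ext y
    obtain ⟨j, hj⟩ := Subgroup.mem_zpowers_iff.mp (hq y)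
    rw [MonoidHom.pow_apply, MonoidHom.one_apply, ← hj, map_zpow, ← zpow_natCast,
      ← zpow_mul, mul_comm, zpow_mul, zpow_natCast, pow_orderOf_eq_one, one_zpow]
  have h1 : orderOf (ψ q) ∣ Nat.card Q := hq' ▸ orderOf_map_dvd ψ q
  have h3 : orderOf (ψ q) = Nat.card Q := Nat.dvd_antisymm h1 (hψ ▸ h2)
  rw [injective_iff_map_eq_one]
  intro y hy
  obtain ⟨j, hj⟩ := Subgroup.mem_zpowers_iff.mp (hq y)
  rw [← hj] at hy ⊢
  rw [map_zpow] at hy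
  have hdvd : ((orderOf (ψ q) : ℕ) : ℤ) ∣ j := orderOf_dvd_iff_zpow_eq_one.mpr hy
  rw [h3, ← hq'] at hdvd
  exact orderOf_dvd_iff_zpow_eq_one.mp hdvd

private lemma totient_le_card_inj_hom (Q : Type*) [CommGroup Q] [Finite Q] [IsCyclic Q] :
    (Nat.card Q).totient ≤ Nat.card {ψ : Q →* ℂˣ // Function.Injective ψ} := by
  haveI := finite_hom Q
  have hcard : Nat.card (Q →* ℂˣ) = Nat.card Q := card_hom_eq Q
  haveI : IsCyclic (Q →* ℂˣ) := by
    have : NeZero (Monoid.exponent Q) := ⟨Monoid.exponent_ne_zero_of_finite⟩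
    obtain ⟨E⟩ := CommGroup.monoidHom_mulEquiv_of_hasEnoughRootsOfUnity Q ℂ
    exact isCyclic_of_surjective E.symm E.symm.surjective
  obtain ⟨g, hg⟩ := IsCyclic.exists_generator (α := Q)
  have key : Nat.card {ψ : Q →* ℂˣ // orderOf ψ = Nat.card Q} = (Nat.card Q).totient :=
    card_orderOf_subtype (hcard ▸ dvd_refl (Nat.card Q))
  rw [← key]
  exact Nat.card_le_card_of_injective
    (fun ψ => (⟨ψ.1, hom_injective_of_orderOf g hg ψ.1 ψ.2⟩ :
      {ψ : Q →* ℂˣ // Function.Injective ψ}))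
    (by
      rintro ⟨ψ₁, h₁⟩ ⟨ψ₂, h₂⟩ hh
      simp only [Subtype.mk.injEq] at hh
      exact Subtype.ext hh)

private lemma card_units_orderOf_le (b : ℕ) (hb : 0 < b) :
    Nat.card {x : ℂˣ // orderOf x = b} ≤ b.totient := by
  have hmem : ∀ x : {x : ℂˣ // orderOf x = b}, (x.1 : ℂ) ∈ primitiveRoots b ℂ := by
    intro x
    have h := IsPrimitiveRoot.orderOf x.1
    rw [x.2] at h
    exact (mem_primitiveRoots hb).mpr (IsPrimitiveRoot.coe_units_iff.mpr h)
  have := Nat.card_le_card_of_injective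
    (fun x : {x : ℂˣ // orderOf x = b} => (⟨(x.1 : ℂ), hmem x⟩ : ↥(primitiveRoots b ℂ)))
    (by
      rintro ⟨x₁, h₁⟩ ⟨x₂, h₂⟩ hh
      simp only [Subtype.mk.injEq] at hh
      exact Subtype.ext (Units.ext hh))
  rwa [Nat.card_eq_finsetCard, Complex.card_primitiveRoots] at this
/-- Let `G` be finite, `A` a cyclic subgroup containing `G'`, `N` an abelian subgroup
containing `A`, and `𝕂` the set of subgroups `K` of `N` with `N/K` cyclic containing no
non-trivial normal subgroup of `G`. Then for every `K ∈ 𝕂` one has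
`|𝕂| ≤ |K| = |N|/exp(N)`. -/
theorem stmt11 {G : Type*} [Group G] [Finite G] (A N : Subgroup G) (hA : IsCyclic A)
    (hGA : commutator G ≤ A) (hAN : A ≤ N) [IsMulCommutative N]
    (𝕂 : Set (Subgroup G))
    (h𝕂 : 𝕂 = {K | K ≤ N ∧ IsCyclic (↥N ⧸ K.subgroupOf N) ∧
      ∀ U : Subgroup G, U.Normal → U ≤ K → U = ⊥})
    (K : Subgroup G) (hK : K ∈ 𝕂) :
    Nat.card 𝕂 ≤ Nat.card K ∧ Nat.card K = Nat.card N / Monoid.exponent N := by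
  classical
  subst h𝕂
  obtain ⟨hKN, hKcyc, hKcore⟩ := hK
  set e := Monoid.exponent ↥N with he_def
  have he0 : e ≠ 0 := Monoid.exponent_ne_zero_of_finite
  have hepos : 0 < e := Nat.pos_of_ne_zero he0
  set n := Nat.card ↥N with hn_def
  have hn0 : 0 < n := Nat.card_pos
  have hNn : N.Normal := normal_of_commutator_le (hGA.trans hAN)
  have hAn : A.Normal := normal_of_commutator_le hGA
  -- conjugation homomorphisms on normal subgroups
  have conj_hom : ∀ (H : Subgroup G), H.Normal → ∀ g : G,
      ∃ f : ↥H →* ↥H, ∀ y : ↥H, (f y : G) = g * y * g⁻¹ := by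
    intro H hHn g
    refine ⟨{ toFun := fun y => ⟨g * y * g⁻¹, hHn.conj_mem y.1 y.2 g⟩,
              map_one' := ?_, map_mul' := ?_ }, fun y => rfl⟩
    · apply Subtype.ext; simp
    · intro x y
      apply Subtype.ext
      simp only [Subgroup.coe_mul]
      group
  -- every K' in the family has cyclic quotient of cardinality exactly e
  have key_card : ∀ K' : Subgroup G, K' ≤ N → IsCyclic (↥N ⧸ K'.subgroupOf N) →
      (∀ U : Subgroup G, U.Normal → U ≤ K' → U = ⊥) →
      Nat.card (↥N ⧸ K'.subgroupOf N) = e := by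
    intro K' hle hcyc hcore
    set m := Nat.card (↥N ⧸ K'.subgroupOf N) with hm
    have hm_dvd : m ∣ e := by
      have h1 : Monoid.exponent (↥N ⧸ K'.subgroupOf N) = m := IsCyclic.exponent_eq_card
      rw [← h1]
      exact MonoidHom.exponent_dvd (QuotientGroup.mk'_surjective _)
    have he_dvd : e ∣ m := by
      set U : Subgroup G := Subgroup.map N.subtype (powMonoidHom m : ↥N →* ↥N).range with hU
      have hUK : U ≤ K' := by
        rintro x hx
        rw [hU] at hx
        obtain ⟨y, hy, rfl⟩ := Subgroup.mem_map.mp hx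
        obtain ⟨w, rfl⟩ := MonoidHom.mem_range.mp hy
        have hmem : (powMonoidHom m w : ↥N) ∈ K'.subgroupOf N := by
          have : (QuotientGroup.mk' (K'.subgroupOf N)) (w ^ m) = 1 := by
            rw [map_pow]
            exact pow_card_eq_one'
          rw [← QuotientGroup.ker_mk' (K'.subgroupOf N)]
          exact this
        have := Subgroup.mem_map_of_mem N.subtype hmem
        rw [Subgroup.subgroupOf_map_subtype] at this
        exact this.1
      have hUnormal : U.Normal := by
        constructor
        intro x hx g
        rw [hU] at hx ⊢
        obtain ⟨y, hy, rfl⟩ := Subgroup.mem_map.mp hx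
        obtain ⟨w, rfl⟩ := MonoidHom.mem_range.mp hy
        obtain ⟨f, hf⟩ := conj_hom N hNn g
        refine Subgroup.mem_map.mpr ⟨f (w ^ m), ⟨f w, ?_⟩, ?_⟩
        · simp [powMonoidHom_apply, map_pow]
        · exact hf (w ^ m)
      have hU_bot : U = ⊥ := hcore U hUnormal hUK
      apply Monoid.exponent_dvd_of_forall_pow_eq_one
      intro y
      have hmem : (N.subtype (y ^ m)) ∈ U := by
        rw [hU]
        exact Subgroup.mem_map_of_mem N.subtype ⟨y, rfl⟩
      rw [hU_bot, Subgroup.mem_bot] at hmem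
      exact Subtype.ext hmem
    exact Nat.dvd_antisymm hm_dvd he_dvd
  -- cardinality of such K'
  have key_cardK : ∀ K' : Subgroup G, K' ≤ N → IsCyclic (↥N ⧸ K'.subgroupOf N) →
      (∀ U : Subgroup G, U.Normal → U ≤ K' → U = ⊥) →
      n = e * Nat.card ↥K' := by
    intro K' hle hcyc hcore
    have h1 := Subgroup.card_eq_card_quotient_mul_card_subgroup (K'.subgroupOf N)
    rw [key_card K' hle hcyc hcore] at h1
    rw [hn_def, h1]
    congr 1
    exact Nat.card_congr (Subgroup.subgroupOfEquivOfLe hle).toEquiv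
  have he_dvd_n : e ∣ n := ⟨Nat.card ↥K, key_cardK K hKN hKcyc hKcore⟩
  -- subgroups of A are normal in G
  have hsubA_normal : ∀ U : Subgroup G, U ≤ A → U.Normal := by
    intro U hUA
    constructor
    intro u hu g
    obtain ⟨f, hf⟩ := conj_hom A hAn g
    obtain ⟨k, hk⟩ := cyclic_hom_pow hA f
    have : g * u * g⁻¹ = (u : G) ^ k := by
      rw [← hf ⟨u, hUA hu⟩, hk]
      simp
    rw [this]
    exact U.zpow_mem hu k
  have hKA : ∀ K' : Subgroup G, (∀ U : Subgroup G, U.Normal → U ≤ K' → U = ⊥) →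
      K' ⊓ A = ⊥ := by
    intro K' hcore
    exact hcore _ (hsubA_normal _ inf_le_right) inf_le_left
  -- the subgroup Z of "coprime to |A|" parts and B = A ⊔ Z
  set a := Nat.card ↥A with ha_def
  set t := a ^ n with ht_def
  set Zn : Subgroup ↥N := (powMonoidHom t : ↥N →* ↥N).range with hZn_def
  set Z : Subgroup G := Subgroup.map N.subtype Zn with hZ_def
  set Bn : Subgroup ↥N := A.subgroupOf N ⊔ Zn with hBn_def
  set B : Subgroup G := Subgroup.map N.subtype Bn with hB_def
  have hordA : ∀ x : G, x ∈ A → orderOf x ∣ a := by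
    intro x hx
    have h1 := orderOf_dvd_natCard (⟨x, hx⟩ : ↥A)
    have h2 : orderOf (A.subtype ⟨x, hx⟩) = orderOf (⟨x, hx⟩ : ↥A) :=
      orderOf_injective A.subtype A.subtype_injective _
    rw [← h2] at h1
    exact h1
  have hordZ : ∀ x : G, x ∈ Z → Nat.Coprime (orderOf x) a := by
    rintro x hx
    rw [hZ_def] at hx
    obtain ⟨y, hy, rfl⟩ := Subgroup.mem_map.mp hx
    obtain ⟨w, rfl⟩ := MonoidHom.mem_range.mp hy
    have h1 : orderOf (N.subtype (powMonoidHom t w)) = orderOf (powMonoidHom t w) :=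
      orderOf_injective N.subtype N.subtype_injective _
    rw [h1]
    exact coprime_orderOf_pow w (orderOf_dvd_natCard w) hn0.ne'
  have hZmem_conj : ∀ (g : G) (x : G), x ∈ Z → g * x * g⁻¹ ∈ Z := by
    intro g x hx
    rw [hZ_def] at hx ⊢
    obtain ⟨y, hy, rfl⟩ := Subgroup.mem_map.mp hx
    obtain ⟨w, rfl⟩ := MonoidHom.mem_range.mp hy
    obtain ⟨f, hf⟩ := conj_hom N hNn g
    refine Subgroup.mem_map.mpr ⟨f (powMonoidHom t w), ⟨f w, ?_⟩, ?_⟩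
    · simp [powMonoidHom_apply, map_pow]
    · exact hf _
  have hZcentral : ∀ x ∈ Z, ∀ g : G, g * x * g⁻¹ = x := by
    intro x hx g
    have hcA : ⁅g, x⁆ ∈ A := hGA (by
      rw [_root_.commutator_def]
      exact Subgroup.commutator_mem_commutator (Subgroup.mem_top g) (Subgroup.mem_top x))
    have hcZ : ⁅g, x⁆ ∈ Z := by
      rw [commutatorElement_def]
      exact mul_mem (hZmem_conj g x hx) (inv_mem hx)
    have h1 : orderOf ⁅g, x⁆ ∣ a := hordA _ hcA
    have h2 : Nat.Coprime (orderOf ⁅g, x⁆) a := hordZ _ hcZ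
    have h4 : orderOf ⁅g, x⁆ ∣ 1 := by
      have h5 := Nat.dvd_gcd (dvd_refl (orderOf ⁅g, x⁆)) h1
      rwa [Nat.Coprime.gcd_eq_one h2] at h5
    have h5 : ⁅g, x⁆ = 1 := orderOf_eq_one_iff.mp (Nat.dvd_one.mp h4)
    rw [commutatorElement_def] at h5
    have h6 := mul_eq_one_iff_eq_inv.mp h5
    simpa using h6
  have hKZ : ∀ K' : Subgroup G, (∀ U : Subgroup G, U.Normal → U ≤ K' → U = ⊥) →
      K' ⊓ Z = ⊥ := by
    intro K' hcore
    apply hcore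
    · constructor
      intro x hx g
      rw [hZcentral x hx.2 g]
      exact hx
    · exact inf_le_left
  have hKB : ∀ K' : Subgroup G, (∀ U : Subgroup G, U.Normal → U ≤ K' → U = ⊥) →
      K' ⊓ B = ⊥ := by
    intro K' hcore
    rw [eq_bot_iff]
    rintro x ⟨hxK, hxB⟩
    rw [hB_def] at hxB
    obtain ⟨y, hyB, rfl⟩ := Subgroup.mem_map.mp hxB
    rw [hBn_def] at hyB
    obtain ⟨ya, hya, yz, hyz, hmul⟩ := Subgroup.mem_sup.mp hyB
    set m := orderOf (N.subtype yz) with hm_def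
    have hcop : Nat.Coprime m a := hordZ _ (Subgroup.mem_map_of_mem N.subtype hyz)
    have hyaA : ((ya : ↥N) : G) ∈ A := hya
    have hpow : (N.subtype y) ^ m = (N.subtype ya) ^ m := by
      have h0 : y ^ m = ya ^ m * yz ^ m := by rw [← hmul, mul_pow]
      calc (N.subtype y) ^ m = N.subtype (y ^ m) := (map_pow _ _ _).symm
        _ = N.subtype (ya ^ m) * N.subtype (yz ^ m) := by rw [h0, map_mul]
        _ = (N.subtype ya) ^ m * (N.subtype yz) ^ m := by rw [map_pow, map_pow]
        _ = (N.subtype ya) ^ m := by rw [pow_orderOf_eq_one, mul_one]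
    have hin : (N.subtype ya) ^ m ∈ K' ⊓ A := by
      constructor
      · rw [← hpow]; exact Subgroup.pow_mem K' hxK m
      · exact Subgroup.pow_mem A hyaA m
    rw [hKA K' hcore, Subgroup.mem_bot] at hin
    have hord_ya : orderOf (N.subtype ya) ∣ m := orderOf_dvd_of_pow_eq_one hin
    have hya1 : (N.subtype ya) = 1 := by
      have hda : orderOf (N.subtype ya) ∣ a := hordA _ hyaA
      have h5 := Nat.dvd_gcd hord_ya hda
      rw [Nat.Coprime.gcd_eq_one hcop] at h5
      exact orderOf_eq_one_iff.mp (Nat.dvd_one.mp h5)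
    have hyeq : y = yz := by
      apply N.subtype_injective
      rw [← hmul, map_mul, hya1, one_mul]
    have hxZ : N.subtype y ∈ Z := by
      rw [hyeq, hZ_def]
      exact Subgroup.mem_map_of_mem N.subtype hyz
    have h6 : N.subtype y ∈ K' ⊓ Z := ⟨hxK, hxZ⟩
    rw [hKZ K' hcore, Subgroup.mem_bot] at h6
    rw [h6]
    exact Subgroup.one_mem ⊥
  -- B-facts using the given K
  have hKB0 : K ⊓ B = ⊥ := hKB K hKcore
  set j : ↥Bn →* (↥N ⧸ K.subgroupOf N) :=
    (QuotientGroup.mk' (K.subgroupOf N)).comp Bn.subtype with hj_def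
  have hjinj : Function.Injective j := by
    rw [injective_iff_map_eq_one]
    intro y hy
    have h1 : (Bn.subtype y : ↥N) ∈ K.subgroupOf N := by
      rw [← QuotientGroup.ker_mk' (K.subgroupOf N)]
      exact hy
    have h2 : (N.subtype (Bn.subtype y)) ∈ K ⊓ B :=
      ⟨Subgroup.mem_subgroupOf.mp h1, Subgroup.mem_map_of_mem N.subtype y.2⟩
    rw [hKB0, Subgroup.mem_bot] at h2
    have h3 : (Bn.subtype y : ↥N) = 1 := N.subtype_injective (by simpa using h2)
    exact Bn.subtype_injective (by simpa using h3)
  haveI hQ0cyc : IsCyclic (↥N ⧸ K.subgroupOf N) := hKcyc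
  haveI hBncyc : IsCyclic ↥Bn :=
    isCyclic_of_surjective (MonoidHom.ofInjective hjinj).symm
      (MonoidHom.ofInjective hjinj).symm.surjective
  set b := Nat.card ↥Bn with hb_def
  have hb0 : 0 < b := Nat.card_pos
  have hQ0card : Nat.card (↥N ⧸ K.subgroupOf N) = e := key_card K hKN hKcyc hKcore
  have hb_dvd_e : b ∣ e := by
    rw [← hQ0card]
    have h1 : b = Nat.card j.range := Nat.card_congr (MonoidHom.ofInjective hjinj).toEquiv
    rw [h1]
    exact Subgroup.card_subgroup_dvd_card j.range
  have hbn : b ∣ n := Subgroup.card_subgroup_dvd_card Bn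
  have hprimes : ∀ p, p.Prime → p ∣ e → p ∣ b := by
    intro p hp hpe
    haveI : Fact p.Prime := ⟨hp⟩
    cases nonempty_fintype ↥N
    have hpn : p ∣ Fintype.card ↥N := by
      rw [← Nat.card_eq_fintype_card]
      exact hpe.trans he_dvd_n
    obtain ⟨x, hxord⟩ := exists_prime_orderOf_dvd_card (G := ↥N) p hpn
    by_cases hpa : p ∣ a
    · have h1 : Nat.card ↥(A.subgroupOf N) ∣ b := Subgroup.card_dvd_of_le le_sup_left
      have h2 : Nat.card ↥(A.subgroupOf N) = a :=
        Nat.card_congr (Subgroup.subgroupOfEquivOfLe hAN).toEquiv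
      rw [h2] at h1
      exact hpa.trans h1
    · have hcop : Nat.Coprime t (orderOf x) := by
        rw [hxord, ht_def]
        exact (Nat.coprime_comm.mp (hp.coprime_iff_not_dvd.mpr hpa)).pow_left n
      obtain ⟨y, hy⟩ := exists_pow_eq x hcop
      have hxBn : x ∈ Bn := Subgroup.mem_sup_right (MonoidHom.mem_range.mpr ⟨y, hy⟩)
      have h3 : orderOf (⟨x, hxBn⟩ : ↥Bn) ∣ b := orderOf_dvd_natCard _
      have h4 : orderOf (Bn.subtype ⟨x, hxBn⟩) = orderOf (⟨x, hxBn⟩ : ↥Bn) :=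
        orderOf_injective Bn.subtype Bn.subtype_injective _
      rw [← h4] at h3
      rw [← hxord]
      exact h3
  have htot : b.totient * (n / b) = e.totient * (n / e) := by
    obtain ⟨s, hs⟩ := hb_dvd_e
    obtain ⟨m', hm'⟩ := he_dvd_n
    have hsprime : ∀ p, p.Prime → p ∣ s → p ∣ b := fun p pp hps =>
      hprimes p pp (hs ▸ dvd_mul_of_dvd_right hps b)
    have h1 : e.totient = s * b.totient := by rw [hs]; exact totient_aux s b hb0 hsprime
    have h2 : n / e = m' := Nat.div_eq_of_eq_mul_right hepos hm'
    have h3 : n / b = s * m' :=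
      Nat.div_eq_of_eq_mul_right hb0 (by rw [hm', hs]; ring)
    rw [h1, h2, h3]; ring
  -- the set of characters injective on Bn
  haveI hfinhom : Finite (↥N →* ℂˣ) := finite_hom ↥N
  set T : Set (↥N →* ℂˣ) := {lam | ∀ y : ↥N, y ∈ Bn → lam y = 1 → y = 1} with hT_def
  set F : ↥T → Subgroup G := fun lam => Subgroup.map N.subtype (MonoidHom.ker lam.1)
    with hF_def
  have hlower : ∀ K' ∈ {K : Subgroup G | K ≤ N ∧ IsCyclic (↥N ⧸ K.subgroupOf N) ∧
      ∀ U : Subgroup G, U.Normal → U ≤ K → U = ⊥},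
      e.totient ≤ Nat.card {lam : ↥T // F lam = K'} := by
    rintro K' ⟨hle, hcyc, hcore⟩
    have hcard : Nat.card (↥N ⧸ K'.subgroupOf N) = e := key_card K' hle hcyc hcore
    haveI : IsCyclic (↥N ⧸ K'.subgroupOf N) := hcyc
    have h1 : e.totient ≤
        Nat.card {ψ : (↥N ⧸ K'.subgroupOf N) →* ℂˣ // Function.Injective ψ} := by
      have h2 := totient_le_card_inj_hom (↥N ⧸ K'.subgroupOf N)
      rwa [hcard] at h2
    refine le_trans h1 (Nat.card_le_card_of_injective ?_ ?_)
    · intro ψ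
      refine ⟨⟨ψ.1.comp (QuotientGroup.mk' (K'.subgroupOf N)), ?_⟩, ?_⟩
      · intro y hyBn hval
        have h2 : QuotientGroup.mk' (K'.subgroupOf N) y = 1 :=
          (injective_iff_map_eq_one ψ.1).mp ψ.2 _ hval
        have h3 : y ∈ K'.subgroupOf N := by
          rw [← QuotientGroup.ker_mk' (K'.subgroupOf N)]
          exact h2
        have h4 : (y : G) ∈ K' ⊓ B :=
          ⟨Subgroup.mem_subgroupOf.mp h3, Subgroup.mem_map_of_mem N.subtype hyBn⟩
        rw [hKB K' hcore, Subgroup.mem_bot] at h4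
        exact Subtype.ext h4
      · show Subgroup.map N.subtype
          (MonoidHom.ker (ψ.1.comp (QuotientGroup.mk' (K'.subgroupOf N)))) = K'
        have hker : MonoidHom.ker (ψ.1.comp (QuotientGroup.mk' (K'.subgroupOf N)))
            = K'.subgroupOf N := by
          ext z
          simp only [MonoidHom.mem_ker, MonoidHom.comp_apply]
          constructor
          · intro hz
            have h5 : QuotientGroup.mk' (K'.subgroupOf N) z = 1 :=
              (injective_iff_map_eq_one ψ.1).mp ψ.2 _ hz
            rw [← QuotientGroup.ker_mk' (K'.subgroupOf N)]
            exact h5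
          · intro hz
            have h5 : QuotientGroup.mk' (K'.subgroupOf N) z = 1 := by
              rw [← QuotientGroup.ker_mk' (K'.subgroupOf N)] at hz
              exact hz
            rw [h5, map_one]
        rw [hker, Subgroup.subgroupOf_map_subtype, inf_eq_left.mpr hle]
    · intro ψ₁ ψ₂ hh
      apply Subtype.ext
      apply MonoidHom.ext
      intro q
      obtain ⟨z, rfl⟩ := QuotientGroup.mk'_surjective (K'.subgroupOf N) q
      exact congrArg (fun w : {lam : ↥T // F lam = K'} => w.1.1 z) hh
  have hmain : Nat.card {K : Subgroup G | K ≤ N ∧ IsCyclic (↥N ⧸ K.subgroupOf N) ∧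
      ∀ U : Subgroup G, U.Normal → U ≤ K → U = ⊥} * e.totient ≤ Nat.card ↥T :=
    aux_count F _ e.totient hlower
  -- upper bound for T
  obtain ⟨g₀, hg₀⟩ := IsCyclic.exists_generator (α := ↥Bn)
  have hg₀ord : orderOf g₀ = b := orderOf_eq_card_of_forall_mem_zpowers hg₀
  set pbase : (↥Bn →* ℂˣ) → (↥N →* ℂˣ) := fun μ =>
    if h : ∃ lam : ↥N →* ℂˣ, lam.domRestrict Bn = μ then h.choose else 1 with hpbase_def
  have hpbase_spec : ∀ lam : ↥N →* ℂˣ,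
      (pbase (lam.domRestrict Bn)).domRestrict Bn = lam.domRestrict Bn := by
    intro lam
    rw [hpbase_def]
    have hex : ∃ lam' : ↥N →* ℂˣ, lam'.domRestrict Bn = lam.domRestrict Bn := ⟨lam, rfl⟩
    simp only [dif_pos hex]
    exact hex.choose_spec
  have hord_comp : ∀ lam : ↥T, orderOf (lam.1 (g₀ : ↥N)) = b := by
    intro lam
    have h1 : orderOf ((g₀ : ↥N)) = b := by
      rw [← hg₀ord]
      exact orderOf_injective Bn.subtype Bn.subtype_injective g₀
    apply Nat.dvd_antisymm
    · rw [← h1]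
      exact orderOf_map_dvd lam.1 _
    · rw [← h1]
      apply orderOf_dvd_of_pow_eq_one
      have h2 : lam.1 ((g₀ : ↥N) ^ (orderOf (lam.1 (g₀ : ↥N)))) = 1 := by
        rw [map_pow]
        exact pow_orderOf_eq_one _
      exact lam.2 _ (Bn.pow_mem g₀.2 _) h2
  have hvanish : ∀ lam : ↥T,
      Bn ≤ MonoidHom.ker (lam.1 * (pbase (lam.1.domRestrict Bn))⁻¹) := by
    intro lam y hy
    rw [MonoidHom.mem_ker]
    have h1 := congrFun (congrArg (fun f : ↥Bn →* ℂˣ => ⇑f) (hpbase_spec lam.1)) ⟨y, hy⟩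
    simp only [MonoidHom.restrict_apply] at h1
    simp [h1]
  set Φ : ↥T → {x : ℂˣ // orderOf x = b} × ((↥N ⧸ Bn) →* ℂˣ) := fun lam =>
    (⟨lam.1 (g₀ : ↥N), hord_comp lam⟩,
      QuotientGroup.lift Bn (lam.1 * (pbase (lam.1.domRestrict Bn))⁻¹) (hvanish lam))
    with hΦ_def
  have hΦinj : Function.Injective Φ := by
    intro lam₁ lam₂ hh
    rw [hΦ_def, Prod.mk.injEq] at hh
    obtain ⟨h1, h2⟩ := hh
    have h1' : lam₁.1 (g₀ : ↥N) = lam₂.1 (g₀ : ↥N) := congrArg Subtype.val h1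
    have hres : lam₁.1.domRestrict Bn = lam₂.1.domRestrict Bn := by
      apply MonoidHom.ext
      intro y
      obtain ⟨jz, hjz⟩ := Subgroup.mem_zpowers_iff.mp (hg₀ y)
      rw [MonoidHom.restrict_apply, MonoidHom.restrict_apply, ← hjz]
      have hcoe : ((g₀ ^ jz : ↥Bn) : ↥N) = ((g₀ : ↥N)) ^ jz := by
        push_cast
        rfl
      rw [hcoe, map_zpow, map_zpow, h1']
    have h2' : lam₁.1 * (pbase (lam₁.1.domRestrict Bn))⁻¹
        = lam₂.1 * (pbase (lam₂.1.domRestrict Bn))⁻¹ := by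
      apply MonoidHom.ext
      intro z
      have h3 := congrArg (fun f : (↥N ⧸ Bn) →* ℂˣ => f (QuotientGroup.mk' Bn z)) h2
      simpa [QuotientGroup.lift_mk'] using h3
    apply Subtype.ext
    apply MonoidHom.ext
    intro z
    have h3 := congrArg (fun f : ↥N →* ℂˣ => f z) h2'
    simp only [MonoidHom.mul_apply, MonoidHom.inv_apply] at h3
    rw [hres] at h3
    exact mul_right_cancel h3
  haveI hfin1 : Finite {x : ℂˣ // orderOf x = b} := by
    apply Finite.of_injective (β := ↥(primitiveRoots b ℂ))
      (fun x => ⟨(x.1 : ℂ), by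
        have h := IsPrimitiveRoot.orderOf x.1
        rw [x.2] at h
        exact (mem_primitiveRoots hb0).mpr (IsPrimitiveRoot.coe_units_iff.mpr h)⟩)
    rintro ⟨x₁, hx₁⟩ ⟨x₂, hx₂⟩ hh
    simp only [Subtype.mk.injEq] at hh
    exact Subtype.ext (Units.ext hh)
  haveI hfin2 : Finite ((↥N ⧸ Bn) →* ℂˣ) := finite_hom _
  have hupper : Nat.card ↥T ≤ b.totient * (n / b) := by
    have hcard2 : Nat.card ((↥N ⧸ Bn) →* ℂˣ) = n / b := by
      rw [card_hom_eq]
      have h1 := Subgroup.card_eq_card_quotient_mul_card_subgroup Bn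
      exact (Nat.div_eq_of_eq_mul_left hb0 h1).symm
    calc Nat.card ↥T
        ≤ Nat.card ({x : ℂˣ // orderOf x = b} × ((↥N ⧸ Bn) →* ℂˣ)) :=
          Nat.card_le_card_of_injective Φ hΦinj
      _ = Nat.card {x : ℂˣ // orderOf x = b} * Nat.card ((↥N ⧸ Bn) →* ℂˣ) :=
          Nat.card_prod _ _
      _ ≤ b.totient * (n / b) := by
          rw [hcard2]
          exact Nat.mul_le_mul_right _ (card_units_orderOf_le b hb0)
  -- final assembly
  have hKcard : Nat.card ↥K = n / e :=
    (Nat.div_eq_of_eq_mul_right hepos (key_cardK K hKN hKcyc hKcore)).symm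
  constructor
  · rw [hKcard]
    have hchain : Nat.card {K : Subgroup G | K ≤ N ∧ IsCyclic (↥N ⧸ K.subgroupOf N) ∧
        ∀ U : Subgroup G, U.Normal → U ≤ K → U = ⊥} * e.totient ≤ (n / e) * e.totient := by
      calc Nat.card {K : Subgroup G | K ≤ N ∧ IsCyclic (↥N ⧸ K.subgroupOf N) ∧
          ∀ U : Subgroup G, U.Normal → U ≤ K → U = ⊥} * e.totient
          ≤ Nat.card ↥T := hmain
        _ ≤ b.totient * (n / b) := hupper
        _ = e.totient * (n / e) := htot
        _ = (n / e) * e.totient := mul_comm _ _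
    exact Nat.le_of_mul_le_mul_right hchain (Nat.totient_pos.mpr hepos)
  · exact hKcard
end

section
/- Let P be a finite abelian p-group, A a cyclic subgroup of P, and H a subgroup of P maximal among subgroups satisfying H ∩ A = 1. Then P/H is cyclic. -/
open Finset

private lemma omega_card_aux {G : Type*} [CommGroup G] [Fintype G] [DecidableEq G] {p : ℕ}
    (_hp : p.Prime) (h1 : #(Finset.univ.filter fun g : G => g ^ p = 1) ≤ p) :
    ∀ k : ℕ, #(Finset.univ.filter fun g : G => g ^ (p ^ k) = 1) ≤ p ^ k := by
  intro k
  induction k with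
  | zero =>
    simp only [pow_zero, pow_one]
    have : (Finset.univ.filter fun g : G => g = 1) = {1} := by
      ext g; simp
    rw [this, Finset.card_singleton]
  | succ k ih =>
    set S : Finset G := Finset.univ.filter fun g : G => g ^ (p ^ (k + 1)) = 1 with hSdef
    have key : #S ≤ p * #(S.image fun g => g ^ p) := by
      apply Finset.card_le_mul_card_image
      intro b hb
      obtain ⟨x₀, hx₀S, hx₀⟩ := Finset.mem_image.mp hb
      have : #({x ∈ S | x ^ p = b}) ≤ #(Finset.univ.filter fun g : G => g ^ p = 1) := by
        apply Finset.card_le_card_of_injOn (fun x => x * x₀⁻¹)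
        · intro x hx
          simp only [Finset.mem_coe, Finset.mem_filter, Finset.mem_univ, true_and] at hx ⊢
          rw [mul_pow, inv_pow, hx.2, hx₀, mul_inv_cancel]
        · intro a _ c _ h
          exact mul_right_cancel h
      exact this.trans h1
    have himg : #(S.image fun g => g ^ p) ≤ p ^ k := by
      refine le_trans (Finset.card_le_card ?_) ih
      intro b hb
      obtain ⟨x, hxS, hx⟩ := Finset.mem_image.mp hb
      simp only [hSdef, Finset.mem_filter, Finset.mem_univ, true_and] at hxS ⊢
      rw [← hx, ← pow_mul, ← pow_succ', hxS]
    calc #S ≤ p * #(S.image fun g => g ^ p) := key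
      _ ≤ p * p ^ k := Nat.mul_le_mul_left p himg
      _ = p ^ (k + 1) := (pow_succ' p k).symm

private lemma cyclic_of_card_pow_p {p : ℕ} (hp : p.Prime) {G : Type*} [CommGroup G] [Finite G]
    (hG : IsPGroup p G) (h1 : Nat.card {g : G // g ^ p = 1} ≤ p) : IsCyclic G := by
  haveI := Fact.mk hp
  cases nonempty_fintype G
  classical
  have h1' : #(Finset.univ.filter fun g : G => g ^ p = 1) ≤ p := by
    rwa [Nat.card_eq_fintype_card, Fintype.card_subtype] at h1
  apply isCyclic_of_card_pow_eq_one_le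
  intro n hn
  set k : ℕ := n.factorization p with hk
  have hsub : (Finset.univ.filter fun g : G => g ^ n = 1) ⊆
      Finset.univ.filter fun g : G => g ^ (p ^ k) = 1 := by
    intro g hg
    simp only [Finset.mem_filter, Finset.mem_univ, true_and] at hg ⊢
    obtain ⟨m, hm⟩ := (IsPGroup.iff_orderOf.mp hG) g
    have hdvd : orderOf g ∣ n := orderOf_dvd_of_pow_eq_one hg
    rw [hm] at hdvd
    have hmk : m ≤ k := by
      rw [hk]
      exact (Nat.Prime.pow_dvd_iff_le_factorization hp hn.ne').mp hdvd
    have : orderOf g ∣ p ^ k := by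
      rw [hm]; exact pow_dvd_pow p hmk
    exact orderOf_dvd_iff_pow_eq_one.mp this
  have hpk : p ^ k ≤ n := Nat.le_of_dvd hn (Nat.ordProj_dvd n p)
  calc #(Finset.univ.filter fun g : G => g ^ n = 1)
      ≤ #(Finset.univ.filter fun g : G => g ^ (p ^ k) = 1) := Finset.card_le_card hsub
    _ ≤ p ^ k := omega_card_aux hp h1' k
    _ ≤ n := hpk

/-- Let `P` be a finite abelian `p`-group, `A` a cyclic subgroup, and `H` maximal among
subgroups with `H ∩ A = 1`. Then `P/H` is cyclic. -/
theorem stmt12 {p : ℕ} (hp : p.Prime) {P : Type*} [CommGroup P] [Finite P]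
    (hP : IsPGroup p P) (A H : Subgroup P) (hA : IsCyclic A)
    (hHA : H ⊓ A = ⊥) (hmax : ∀ H' : Subgroup P, H < H' → H' ⊓ A ≠ ⊥) :
    IsCyclic (P ⧸ H) := by
  classical
  haveI := Fact.mk hp
  set π : P →* P ⧸ H := QuotientGroup.mk' H with hπ
  set B : Subgroup (P ⧸ H) := A.map π with hB
  haveI := hA
  haveI hBcyc : IsCyclic B :=
    isCyclic_of_surjective (π.subgroupMap A) (π.subgroupMap_surjective A)
  -- every nontrivial subgroup of P/H meets B nontrivially
  have claim : ∀ K : Subgroup (P ⧸ H), K ≠ ⊥ → ∃ b : P ⧸ H, b ∈ K ∧ b ∈ B ∧ b ≠ 1 := by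
    intro K hK
    have hle : H ≤ K.comap π := by
      intro h hh
      simp only [Subgroup.mem_comap, hπ]
      have : π h = 1 := by
        rw [hπ]
        simpa [QuotientGroup.eq_one_iff] using hh
      rw [this]; exact K.one_mem
    have hlt : H < K.comap π := by
      refine lt_of_le_of_ne hle fun heq => hK ?_
      rw [eq_bot_iff]
      intro x hx
      obtain ⟨y, rfl⟩ := QuotientGroup.mk'_surjective H x
      have : y ∈ K.comap π := by exact hx
      rw [← heq] at this
      simpa [Subgroup.mem_bot, QuotientGroup.eq_one_iff] using this
    have hne := hmax _ hlt
    obtain ⟨a, ha, hane⟩ : ∃ a, a ∈ (K.comap π) ⊓ A ∧ a ≠ 1 := by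
      by_contra hcon
      push_neg at hcon
      exact hne (eq_bot_iff.mpr fun x hx => Subgroup.mem_bot.mpr (hcon x hx))
    refine ⟨π a, ha.1, Subgroup.mem_map_of_mem π ha.2, ?_⟩
    intro h1
    have : a ∈ H := by
      rw [hπ] at h1
      simpa [QuotientGroup.eq_one_iff] using h1
    have : a ∈ H ⊓ A := ⟨this, ha.2⟩
    rw [hHA] at this
    exact hane (Subgroup.mem_bot.mp this)
  -- the p-torsion subgroup of P/H
  set T : Subgroup (P ⧸ H) := (powMonoidHom p : (P ⧸ H) →* (P ⧸ H)).ker with hT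
  have hTmem : ∀ g : P ⧸ H, g ∈ T ↔ g ^ p = 1 := by
    intro g; simp [hT, MonoidHom.mem_ker, powMonoidHom_apply]
  have hTB : T ≤ B := by
    intro g hg
    rcases eq_or_ne g 1 with rfl | hg1
    · exact B.one_mem
    have hgp : g ^ p = 1 := (hTmem g).mp hg
    have hord : orderOf g = p := orderOf_eq_prime hgp hg1
    obtain ⟨b, hbK, hbB, hbne⟩ := claim (Subgroup.zpowers g)
      (by rwa [ne_eq, Subgroup.zpowers_eq_bot])
    obtain ⟨m, hm⟩ := Subgroup.mem_zpowers_iff.mp hbK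
    have hnd : ¬ ((p : ℤ) ∣ m) := by
      intro hdvd
      apply hbne
      rw [← hm]
      have : ((orderOf g : ℤ)) ∣ m := by rwa [hord]
      exact (orderOf_dvd_iff_zpow_eq_one (G := P ⧸ H)).mp (by exact_mod_cast this)
    have hcop : IsCoprime (p : ℤ) m := by
      rw [Int.isCoprime_iff_gcd_eq_one]
      rcases Nat.coprime_or_dvd_of_prime hp m.natAbs with h | h
      · simpa [Int.gcd] using h
      · exact absurd (Int.natCast_dvd_natCast.mpr h |>.trans (Int.natAbs_dvd.mpr dvd_rfl)) hnd
    obtain ⟨u, v, huv⟩ := hcop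
    have : g = b ^ v := by
      calc g = g ^ (u * (p : ℤ) + v * m) := by rw [huv, zpow_one]
        _ = (g ^ (p : ℤ)) ^ u * (g ^ m) ^ v := by
            rw [zpow_add, mul_comm u, mul_comm v, zpow_mul, zpow_mul]
        _ = b ^ v := by
            rw [hm]
            have : g ^ (p : ℤ) = 1 := by
              rw [zpow_natCast, hgp]
            rw [this, one_zpow, one_mul]
    rw [this]
    exact Subgroup.zpow_mem B hbB v
  -- T is cyclic and has exponent dividing p, hence card ≤ p
  haveI hTcyc : IsCyclic T := Subgroup.isCyclic_of_le hTB
  have hTexp : Monoid.exponent T ∣ p := by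
    apply Monoid.exponent_dvd_of_forall_pow_eq_one
    intro x
    ext
    push_cast
    exact (hTmem x).mp x.2
  have hTcard : Nat.card T ≤ p := by
    rw [← IsCyclic.exponent_eq_card]
    exact Nat.le_of_dvd hp.pos hTexp
  -- conclude
  apply cyclic_of_card_pow_p hp (hP.to_quotient H)
  calc Nat.card {g : P ⧸ H // g ^ p = 1}
      = Nat.card T := Nat.card_congr (Equiv.subtypeEquivRight fun g => (hTmem g).symm)
    _ ≤ p := hTcard
end

section
/- Let G be a finite group with G' contained in a cyclic normal subgroup A, let x ∈ G be such that (x, g) ∈ A for all g ∈ G and x commutes with every element of A, and let f be a positive integer. Then [C_G(x^f) : C_G(x)] ≤ f. -/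
/-- Let `G` be finite with `G'` contained in a cyclic normal subgroup `A`, let `x ∈ G`
centralize `A` with all commutators `(x, g) ∈ A`, and let `f ≥ 1`. Then
`[C_G(x^f) : C_G(x)] ≤ f`. -/
theorem stmt14 {G : Type*} [Group G] [Finite G] (A : Subgroup G) [A.Normal]
    (hA : IsCyclic A) (hGA : commutator G ≤ A) (x : G)
    (hxA : ∀ g : G, x⁻¹ * g⁻¹ * x * g ∈ A) (hxC : ∀ a ∈ A, x * a = a * x)
    (f : ℕ) (hf : 0 < f) :
    (Subgroup.centralizer {x}).relIndex (Subgroup.centralizer {x ^ f}) ≤ f := by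
  classical
  set K := Subgroup.centralizer {x ^ f} with hK
  set H := (Subgroup.centralizer {x}).subgroupOf K with hH
  have hNormal : A.Normal := inferInstance
  have hc : ∀ g : G, g * x * g⁻¹ * x⁻¹ ∈ A := by
    intro g
    have h1 : x⁻¹ * g * x * g⁻¹ ∈ A := by simpa using hxA g⁻¹
    have h2 := hNormal.conj_mem _ h1 x
    have h3 : x * (x⁻¹ * g * x * g⁻¹) * x⁻¹ = g * x * g⁻¹ * x⁻¹ := by group
    rwa [h3] at h2
  have hcf : ∀ g : K, ((g : G) * x * (g : G)⁻¹ * x⁻¹) ^ f = 1 := by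
    intro g
    have hg : x ^ f * (g : G) = (g : G) * x ^ f :=
      Subgroup.mem_centralizer_iff.mp g.2 _ rfl
    have hcom : Commute ((g : G) * x * (g : G)⁻¹ * x⁻¹) x := (hxC _ (hc (g : G))).symm
    have h1 : ((g : G) * x * (g : G)⁻¹) ^ f = (g : G) * x ^ f * (g : G)⁻¹ := by
      rw [← conj_pow]
    have h2 : ((g : G) * x * (g : G)⁻¹ * x⁻¹ * x) ^ f
        = ((g : G) * x * (g : G)⁻¹ * x⁻¹) ^ f * x ^ f := hcom.mul_pow f
    have h3 : (g : G) * x * (g : G)⁻¹ * x⁻¹ * x = (g : G) * x * (g : G)⁻¹ := by group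
    rw [h3, h1] at h2
    have h4 : (g : G) * x ^ f * (g : G)⁻¹ = x ^ f := by rw [← hg]; group
    rw [h4] at h2
    have h5 : ((g : G) * x * (g : G)⁻¹ * x⁻¹) ^ f * x ^ f = 1 * x ^ f := by
      rw [← h2, one_mul]
    exact mul_right_cancel h5
  let c : K ⧸ H → {a : A // a ^ f = 1} := Quotient.lift
    (fun g : K => (⟨⟨(g : G) * x * (g : G)⁻¹ * x⁻¹, hc g⟩, by
      ext
      push_cast
      exact hcf g⟩ : {a : A // a ^ f = 1}))
    (by
      intro a b hab
      have hab' : (a : K)⁻¹ * b ∈ H := QuotientGroup.leftRel_apply.mp hab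
      rw [hH, Subgroup.mem_subgroupOf] at hab'
      have hx' : x * ((a : G)⁻¹ * b) = ((a : G)⁻¹ * b) * x :=
        Subgroup.mem_centralizer_iff.mp hab' _ rfl
      have key : (a : G) * x * (a : G)⁻¹ * x⁻¹ = (b : G) * x * (b : G)⁻¹ * x⁻¹ := by
        have : (a : G) * x * (a : G)⁻¹ = (b : G) * x * (b : G)⁻¹ := by
          calc (a : G) * x * (a : G)⁻¹
              = (a : G) * (x * ((a : G)⁻¹ * b)) * (b : G)⁻¹ := by group
            _ = (a : G) * (((a : G)⁻¹ * b) * x) * (b : G)⁻¹ := by rw [hx']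
            _ = (b : G) * x * (b : G)⁻¹ := by group
        rw [this]
      exact Subtype.ext (Subtype.ext key))
  have hinj : Function.Injective c := by
    intro p q
    refine Quotient.inductionOn₂ p q ?_
    intro a b hab
    have heq : (a : G) * x * (a : G)⁻¹ * x⁻¹ = (b : G) * x * (b : G)⁻¹ * x⁻¹ :=
      congrArg (fun z : {a : A // a ^ f = 1} => ((z : A) : G)) hab
    apply Quotient.sound
    refine QuotientGroup.leftRel_apply.mpr ?_
    rw [hH, Subgroup.mem_subgroupOf]
    rw [Subgroup.mem_centralizer_iff]
    intro y hy
    rw [Set.mem_singleton_iff] at hy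
    rw [hy]
    have h2 : (a : G) * x * (a : G)⁻¹ = (b : G) * x * (b : G)⁻¹ :=
      mul_right_cancel heq
    calc x * ((a : G)⁻¹ * b) = (a:G)⁻¹ * ((a:G) * x * (a:G)⁻¹) * b := by group
      _ = (a:G)⁻¹ * ((b:G) * x * (b:G)⁻¹) * b := by rw [h2]
      _ = ((a : G)⁻¹ * b) * x := by group
  have h1 : (Subgroup.centralizer {x}).relIndex K = Nat.card (K ⧸ H) := rfl
  rw [h1]
  have h2 : Nat.card (K ⧸ H) ≤ Nat.card {a : A // a ^ f = 1} :=
    Nat.card_le_card_of_injective c hinj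
  refine h2.trans ?_
  have : Fintype A := Fintype.ofFinite A
  rw [Nat.card_eq_fintype_card, Fintype.card_subtype]
  haveI := hA
  exact IsCyclic.card_pow_eq_one_le hf
end

section
/- Let G be a finite group, N an abelian normal subgroup of G, ψ a linear character of N (a homomorphism N → ℂ*), and ψ^G the induced character of G. Then for every element u = Σ_g u_g·g of the complex group algebra ℂG: ψ^G(u) = Σ_{n ∈ N} ψ(n)·[C_G(n) : N]·ε_n(u), where ε_n(u) = Σ_{h ∈ n^G} u_h is the partial augmentation and ψ^G is extended linearly to ℂG. -/
open scoped Classical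

lemma auxsum_dite {α : Type*} [Fintype α] (p : α → Prop) [DecidablePred p]
    (f : {x // p x} → ℂ) :
    ∑ z : α, (if h : p z then f ⟨z, h⟩ else 0) = ∑ n : {x // p x}, f n := by
  rw [← Finset.sum_filter_add_sum_filter_not Finset.univ p]
  rw [Finset.sum_congr rfl (fun x hx => dif_neg (Finset.mem_filter.mp hx).2), Finset.sum_const_zero,
    add_zero]
  rw [Finset.sum_subtype (p := p) (Finset.univ.filter p) (by simp)
    (fun z => if h : p z then f ⟨z, h⟩ else 0)]
  exact Finset.sum_congr rfl fun n _ => by rw [dif_pos n.2]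

lemma fibcard {G : Type*} [Group G] [Fintype G] (z b : G) (y₀ : G) (hy₀ : y₀ * z * y₀⁻¹ = b) :
    (Finset.univ.filter fun y : G => y * z * y⁻¹ = b).card
      = Nat.card (Subgroup.centralizer ({z} : Set G)) := by
  rw [Nat.card_eq_fintype_card, Fintype.card_subtype]
  refine Finset.card_nbij' (fun y => y₀⁻¹ * y) (fun c => y₀ * c) ?_ ?_ ?_ ?_
  · intro y hy
    simp only [Finset.mem_coe, Finset.mem_filter, Finset.mem_univ, true_and] at hy ⊢
    rw [Subgroup.mem_centralizer_singleton_iff]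
    have h1 : y * z * y⁻¹ = y₀ * z * y₀⁻¹ := hy.trans hy₀.symm
    have := congrArg (fun t => y₀⁻¹ * t * y) h1
    simpa [mul_assoc] using this
  · intro c hc
    simp only [Finset.mem_coe, Finset.mem_filter, Finset.mem_univ, true_and] at hc ⊢
    rw [Subgroup.mem_centralizer_singleton_iff] at hc
    rw [← hy₀]
    have := congrArg (fun t => y₀ * t * (c⁻¹ * y₀⁻¹)) hc
    simpa [mul_assoc] using this
  · intro y _; group
  · intro c _; group

lemma keycount {G : Type*} [Group G] [Fintype G] (z : G) (u : G → ℂ) :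
    ∑ y : G, u (y * z * y⁻¹)
      = (Nat.card (Subgroup.centralizer ({z} : Set G)) : ℂ) *
        ∑ h : G, if IsConj z h then u h else 0 := by
  rw [Finset.sum_comp u (fun y : G => y * z * y⁻¹)]
  have himg : Finset.univ.image (fun y : G => y * z * y⁻¹)
      = Finset.univ.filter (fun h => IsConj z h) := by
    ext b
    simp [isConj_iff, eq_comm]
  rw [himg, ← Finset.sum_filter, Finset.mul_sum]
  refine Finset.sum_congr rfl fun b hb => ?_
  simp only [Finset.mem_filter, Finset.mem_univ, true_and] at hb
  obtain ⟨y₀, hy₀⟩ := isConj_iff.mp hb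
  rw [fibcard z b y₀ hy₀, nsmul_eq_mul]

/-- Let `N` be an abelian normal subgroup of a finite group `G`, `ψ : N → ℂ*` a linear
character, and `ψ^G` the induced character (given by the standard formula
`ψ^G(g) = |N|⁻¹ Σ_{y ∈ G} ψ°(y⁻¹ g y)`), extended linearly to `ℂG`. Then for every
`u ∈ ℂG`:  `ψ^G(u) = Σ_{n ∈ N} ψ(n)·[C_G(n) : N]·ε_n(u)`. -/
theorem stmt15 {G : Type*} [Group G] [Fintype G] (N : Subgroup G) [N.Normal]
    (hN : ∀ x ∈ N, ∀ y ∈ N, x * y = y * x) (ψ : ↥N →* ℂˣ)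
    (u : MonoidAlgebra ℂ G) :
    ∑ g : G, u.coeff g * ((Nat.card N : ℂ)⁻¹ *
        ∑ y : G, if h : y⁻¹ * g * y ∈ N then ((ψ ⟨y⁻¹ * g * y, h⟩ : ℂˣ) : ℂ) else 0)
      = ∑ n : ↥N, ((ψ n : ℂˣ) : ℂ) *
          (N.relIndex (Subgroup.centralizer {(n : G)}) : ℂ) *
          ∑ h : G, if IsConj (n : G) h then u.coeff h else 0 := by
  have hcentle : ∀ n : ↥N, N ≤ Subgroup.centralizer {(n : G)} := fun n m hm =>
    Subgroup.mem_centralizer_singleton_iff.mpr (hN m hm n n.2)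
  have hrel : ∀ n : ↥N, ((N.relIndex (Subgroup.centralizer {(n : G)}) : ℂ))
      = (Nat.card N : ℂ)⁻¹ * (Nat.card (Subgroup.centralizer ({(n : G)} : Set G)) : ℂ) := by
    intro n
    have h := Subgroup.relIndex_mul_relIndex ⊥ N (Subgroup.centralizer {(n : G)}) bot_le
      (hcentle n)
    rw [Subgroup.relIndex_bot_left, Subgroup.relIndex_bot_left] at h
    have hN0 : (Nat.card N : ℂ) ≠ 0 := Nat.cast_ne_zero.mpr Nat.card_pos.ne'
    rw [← h, Nat.cast_mul, inv_mul_cancel_left₀ hN0]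
  -- reindex g ↦ y * z * y⁻¹ for each y
  have step2 : ∀ y : G, (∑ g : G, u.coeff g *
        (if h : y⁻¹ * g * y ∈ N then ((ψ ⟨y⁻¹ * g * y, h⟩ : ℂˣ) : ℂ) else 0))
      = ∑ z : G, u.coeff (y * z * y⁻¹) *
        (if h : z ∈ N then ((ψ ⟨z, h⟩ : ℂˣ) : ℂ) else 0) := by
    intro y
    rw [← Equiv.sum_comp (MulAut.conj y).toEquiv]
    refine Finset.sum_congr rfl fun z _ => ?_
    have hz : y⁻¹ * (y * z * y⁻¹) * y = z := by group
    simp only [MulAut.conj_apply, MulEquiv.toEquiv_eq_coe, EquivLike.coe_coe]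
    congr 1
    simp only [hz]
  have step3 : ∀ z : G, (∑ y : G, u.coeff (y * z * y⁻¹) *
        (if h : z ∈ N then ((ψ ⟨z, h⟩ : ℂˣ) : ℂ) else 0))
      = (if h : z ∈ N then ((ψ ⟨z, h⟩ : ℂˣ) : ℂ) *
          ((Nat.card (Subgroup.centralizer ({z} : Set G)) : ℂ) *
            ∑ h : G, if IsConj z h then u.coeff h else 0) else 0) := by
    intro z
    rw [← Finset.sum_mul, keycount]
    by_cases hz : z ∈ N
    · rw [dif_pos hz, dif_pos hz]; ring
    · rw [dif_neg hz, dif_neg hz, mul_zero]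
  calc ∑ g : G, u.coeff g * ((Nat.card N : ℂ)⁻¹ *
        ∑ y : G, if h : y⁻¹ * g * y ∈ N then ((ψ ⟨y⁻¹ * g * y, h⟩ : ℂˣ) : ℂ) else 0)
      = (Nat.card N : ℂ)⁻¹ * ∑ g : G, u.coeff g *
          ∑ y : G, (if h : y⁻¹ * g * y ∈ N then ((ψ ⟨y⁻¹ * g * y, h⟩ : ℂˣ) : ℂ) else 0) := by
        rw [Finset.mul_sum]
        exact Finset.sum_congr rfl fun g _ => mul_left_comm _ _ _
    _ = (Nat.card N : ℂ)⁻¹ * ∑ g : G, ∑ y : G,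
          u.coeff g * (if h : y⁻¹ * g * y ∈ N then ((ψ ⟨y⁻¹ * g * y, h⟩ : ℂˣ) : ℂ) else 0) := by
        rw [Finset.sum_congr rfl fun g _ => Finset.mul_sum _ _ _]
    _ = (Nat.card N : ℂ)⁻¹ * ∑ y : G, ∑ g : G,
          u.coeff g * (if h : y⁻¹ * g * y ∈ N then ((ψ ⟨y⁻¹ * g * y, h⟩ : ℂˣ) : ℂ) else 0) := by
        rw [Finset.sum_comm]
    _ = (Nat.card N : ℂ)⁻¹ * ∑ y : G, ∑ z : G,
          u.coeff (y * z * y⁻¹) * (if h : z ∈ N then ((ψ ⟨z, h⟩ : ℂˣ) : ℂ) else 0) := by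
        rw [Finset.sum_congr rfl fun y _ => step2 y]
    _ = (Nat.card N : ℂ)⁻¹ * ∑ z : G, ∑ y : G,
          u.coeff (y * z * y⁻¹) * (if h : z ∈ N then ((ψ ⟨z, h⟩ : ℂˣ) : ℂ) else 0) := by
        rw [Finset.sum_comm]
    _ = (Nat.card N : ℂ)⁻¹ * ∑ z : G,
          (if h : z ∈ N then ((ψ ⟨z, h⟩ : ℂˣ) : ℂ) *
            ((Nat.card (Subgroup.centralizer ({z} : Set G)) : ℂ) *
              ∑ h : G, if IsConj z h then u.coeff h else 0) else 0) := by
        rw [Finset.sum_congr rfl fun z _ => step3 z]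
    _ = (Nat.card N : ℂ)⁻¹ * ∑ n : ↥N, ((ψ n : ℂˣ) : ℂ) *
          ((Nat.card (Subgroup.centralizer ({(n : G)} : Set G)) : ℂ) *
            ∑ h : G, if IsConj (n : G) h then u.coeff h else 0) := by
        rw [auxsum_dite (fun z => z ∈ N) (fun n => ((ψ n : ℂˣ) : ℂ) *
          ((Nat.card (Subgroup.centralizer ({(n : G)} : Set G)) : ℂ) *
            ∑ h : G, if IsConj (n : G) h then u.coeff h else 0))]
    _ = ∑ n : ↥N, ((ψ n : ℂˣ) : ℂ) *
          (N.relIndex (Subgroup.centralizer {(n : G)}) : ℂ) *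
          ∑ h : G, if IsConj (n : G) h then u.coeff h else 0 := by
        rw [Finset.mul_sum]
        refine Finset.sum_congr rfl fun n _ => ?_
        rw [hrel n]
        ring
end

section
/- Let U be a complex square matrix with U^m = I, and let α be an m-th root of unity. Then the multiplicity of α as an eigenvalue of U equals (1/m)·Σ_{d | m} Tr_{ℚ(ζ_m^d)/ℚ}( tr(U^d)·α^{−d} ), where tr denotes the matrix trace and Tr_{ℚ(ζ)/ℚ} the field trace of the cyclotomic field. -/
open Finset Polynomial

namespace Stmt17Aux

variable {k : ℕ}

noncomputable def projP (m : ℕ) (β : ℂ) (F : Module.End ℂ (Fin k → ℂ)) :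
    Module.End ℂ (Fin k → ℂ) :=
  (m : ℂ)⁻¹ • ∑ j ∈ Finset.range m, (β⁻¹) ^ j • F ^ j

lemma toLin'_pow (U : Matrix (Fin k) (Fin k) ℂ) (j : ℕ) :
    (Matrix.toLin' U) ^ j = Matrix.toLin' (U ^ j) := by
  induction j with
  | zero => rw [pow_zero, pow_zero, Matrix.toLin'_one]; rfl
  | succ n ih => rw [pow_succ, pow_succ, Matrix.toLin'_mul, ← ih]; rfl

lemma trace_toLin' (M : Matrix (Fin k) (Fin k) ℂ) :
    LinearMap.trace ℂ (Fin k → ℂ) (Matrix.toLin' M) = M.trace := by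
  rw [LinearMap.trace_eq_matrix_trace ℂ (Pi.basisFun ℂ (Fin k)),
    LinearMap.toMatrix_eq_toMatrix', LinearMap.toMatrix'_toLin']

lemma mul_projP {m : ℕ} (hm : 0 < m) {β : ℂ} (hβ : β ^ m = 1)
    (F : Module.End ℂ (Fin k → ℂ)) (hF : F ^ m = 1) :
    F * projP m β F = β • projP m β F := by
  have hβ0 : β ≠ 0 := by
    rintro rfl
    rw [zero_pow hm.ne'] at hβ
    exact zero_ne_one hβ
  have key : F * (∑ j ∈ Finset.range m, (β⁻¹) ^ j • F ^ j)
      = β • ∑ j ∈ Finset.range m, (β⁻¹) ^ j • F ^ j := by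
    rw [Finset.mul_sum, Finset.smul_sum]
    have h1 : ∀ j : ℕ, F * ((β⁻¹) ^ j • F ^ j) = (β * β⁻¹ ^ (j + 1)) • F ^ (j + 1) := by
      intro j
      rw [mul_smul_comm, ← pow_succ']
      congr 1
      rw [pow_succ', ← mul_assoc, mul_inv_cancel₀ hβ0, one_mul]
    have h2 : ∀ j : ℕ, β • ((β⁻¹) ^ j • F ^ j) = (β * β⁻¹ ^ j) • F ^ j := fun j =>
      smul_smul β _ _
    calc ∑ j ∈ Finset.range m, F * ((β⁻¹) ^ j • F ^ j)
        = ∑ j ∈ Finset.range m, (β * β⁻¹ ^ (j + 1)) • F ^ (j + 1) :=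
          Finset.sum_congr rfl fun j _ => h1 j
      _ = ∑ j ∈ Finset.range m, (β * β⁻¹ ^ j) • F ^ j := by
          have e1 := Finset.sum_range_succ' (fun j => (β * β⁻¹ ^ j) • F ^ j) m
          have e2 := Finset.sum_range_succ (fun j => (β * β⁻¹ ^ j) • F ^ j) m
          have h3 : (β * β⁻¹ ^ m) • F ^ m = (β * β⁻¹ ^ 0) • F ^ 0 := by
            rw [hF, pow_zero, inv_pow, hβ, inv_one, pow_zero]
          rw [h3] at e2
          exact add_right_cancel (e1.symm.trans e2)
      _ = ∑ j ∈ Finset.range m, β • ((β⁻¹) ^ j • F ^ j) :=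
          Finset.sum_congr rfl fun j _ => (h2 j).symm
  unfold projP
  rw [mul_smul_comm, key, smul_comm]

lemma isProj_projP {m : ℕ} (hm : 0 < m) {U : Matrix (Fin k) (Fin k) ℂ} (hU : U ^ m = 1)
    {β : ℂ} (hβ : β ^ m = 1) :
    LinearMap.IsProj (Module.End.eigenspace (Matrix.toLin' U) β)
      (projP m β (Matrix.toLin' U)) := by
  have hβ0 : β ≠ 0 := by
    rintro rfl
    rw [zero_pow hm.ne'] at hβ
    exact zero_ne_one hβ
  have hF : (Matrix.toLin' U) ^ m = 1 := by
    rw [toLin'_pow, hU, Matrix.toLin'_one]; rfl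
  have hmul := mul_projP hm hβ (Matrix.toLin' U) hF
  constructor
  · intro x
    rw [Module.End.mem_eigenspace_iff]
    have := congrArg (fun T : Module.End ℂ (Fin k → ℂ) => T x) hmul
    simpa [Module.End.mul_apply, LinearMap.smul_apply] using this
  · intro x hx
    rw [Module.End.mem_eigenspace_iff] at hx
    have hpow : ∀ j : ℕ, (Matrix.toLin' U ^ j) x = β ^ j • x := by
      intro j
      induction j with
      | zero => simp
      | succ n ih =>
          rw [pow_succ, Module.End.mul_apply, hx, map_smul, ih, smul_smul, ← pow_succ']
    show projP m β (Matrix.toLin' U) x = x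
    unfold projP
    rw [LinearMap.smul_apply, LinearMap.sum_apply]
    have hc : ∀ j ∈ Finset.range m, ((β⁻¹) ^ j • Matrix.toLin' U ^ j) x = x := by
      intro j _
      rw [LinearMap.smul_apply, hpow, smul_smul, inv_pow,
        inv_mul_cancel₀ (pow_ne_zero j hβ0), one_smul]
    rw [Finset.sum_congr rfl hc, Finset.sum_const, Finset.card_range,
      ← Nat.cast_smul_eq_nsmul ℂ, smul_smul,
      inv_mul_cancel₀ (Nat.cast_ne_zero.mpr hm.ne'), one_smul]

lemma trace_projP (m : ℕ) (β : ℂ) (U : Matrix (Fin k) (Fin k) ℂ) :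
    LinearMap.trace ℂ (Fin k → ℂ) (projP m β (Matrix.toLin' U))
      = (m : ℂ)⁻¹ * ∑ j ∈ Finset.range m, (β⁻¹) ^ j * (U ^ j).trace := by
  unfold projP
  rw [map_smul, map_sum, smul_eq_mul]
  congr 1
  refine Finset.sum_congr rfl fun j _ => ?_
  rw [map_smul, smul_eq_mul, toLin'_pow, trace_toLin']

lemma finrank_eigenspace {m : ℕ} (hm : 0 < m) {U : Matrix (Fin k) (Fin k) ℂ} (hU : U ^ m = 1)
    {β : ℂ} (hβ : β ^ m = 1) :
    ((Module.finrank ℂ (Module.End.eigenspace (Matrix.toLin' U) β) : ℂ))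
      = (m : ℂ)⁻¹ * ∑ j ∈ Finset.range m, (β⁻¹) ^ j * (U ^ j).trace := by
  rw [← (isProj_projP hm hU hβ).trace, trace_projP]

lemma sum_projP {m : ℕ} (hm : 0 < m) {ζ : ℂ} (hζ : IsPrimitiveRoot ζ m)
    (F : Module.End ℂ (Fin k → ℂ)) :
    ∑ c ∈ Finset.range m, projP m (ζ ^ c) F = 1 := by
  unfold projP
  rw [← Finset.smul_sum, Finset.sum_comm]
  have hin : ∀ j ∈ Finset.range m,
      ∑ c ∈ Finset.range m, ((ζ ^ c)⁻¹) ^ j • F ^ j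
        = (if j = 0 then (m : ℂ) else 0) • F ^ j := by
    intro j hj
    rw [← Finset.sum_smul]
    congr 1
    have hexp : ∀ c : ℕ, ((ζ ^ c)⁻¹) ^ j = ((ζ ^ j)⁻¹) ^ c := by
      intro c
      rw [← inv_pow, ← inv_pow, ← pow_mul, ← pow_mul, mul_comm]
    rw [Finset.sum_congr rfl fun c _ => hexp c]
    by_cases h0 : j = 0
    · subst h0
      simp
    · rw [if_neg h0]
      have hz1 : (ζ ^ j)⁻¹ ≠ 1 := by
        intro h
        have : ζ ^ j = 1 := by
          rw [← inv_inv (ζ ^ j), h, inv_one]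
        have hdvd := (hζ.pow_eq_one_iff_dvd j).mp this
        have hjm : j < m := Finset.mem_range.mp hj
        exact h0 (Nat.eq_zero_of_dvd_of_lt hdvd hjm)
      rw [geom_sum_eq hz1]
      have : ((ζ ^ j)⁻¹) ^ m = 1 := by
        rw [← inv_pow, ← pow_mul, mul_comm, pow_mul, inv_pow, hζ.pow_eq_one, inv_one,
          one_pow]
      rw [this, sub_self, zero_div]
  rw [Finset.sum_congr rfl hin,
    Finset.sum_eq_single_of_mem 0 (Finset.mem_range.mpr hm)
      (fun j _ hj0 => by rw [if_neg hj0, zero_smul]),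
    if_pos rfl, pow_zero, smul_smul, inv_mul_cancel₀ (Nat.cast_ne_zero.mpr hm.ne'), one_smul]

lemma trace_pow {m : ℕ} (hm : 0 < m) {U : Matrix (Fin k) (Fin k) ℂ} (hU : U ^ m = 1)
    {ζ : ℂ} (hζ : IsPrimitiveRoot ζ m) (j : ℕ) :
    ((U ^ j).trace : ℂ)
      = ∑ c ∈ Finset.range m,
          (Module.finrank ℂ (Module.End.eigenspace (Matrix.toLin' U) (ζ ^ c)) : ℂ)
            * (ζ ^ c) ^ j := by
  have hF : (Matrix.toLin' U) ^ m = 1 := by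
    rw [toLin'_pow, hU, Matrix.toLin'_one]; rfl
  have hP : ∀ c : ℕ, (Matrix.toLin' U) ^ j * projP m (ζ ^ c) (Matrix.toLin' U)
      = ((ζ ^ c) ^ j) • projP m (ζ ^ c) (Matrix.toLin' U) := by
    intro c
    induction j with
    | zero => rw [pow_zero, pow_zero, one_mul, one_smul]
    | succ n ih =>
        rw [pow_succ, mul_assoc,
          mul_projP hm (by rw [← pow_mul, mul_comm, pow_mul, hζ.pow_eq_one, one_pow])
            (Matrix.toLin' U) hF,
          mul_smul_comm, ih, smul_smul, ← pow_succ']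
  calc ((U ^ j).trace : ℂ)
      = LinearMap.trace ℂ (Fin k → ℂ) ((Matrix.toLin' U) ^ j) := by
        rw [toLin'_pow, trace_toLin']
    _ = LinearMap.trace ℂ (Fin k → ℂ)
          ((Matrix.toLin' U) ^ j * ∑ c ∈ Finset.range m, projP m (ζ ^ c) (Matrix.toLin' U)) := by
        rw [sum_projP hm hζ, mul_one]
    _ = ∑ c ∈ Finset.range m,
          LinearMap.trace ℂ (Fin k → ℂ)
            ((Matrix.toLin' U) ^ j * projP m (ζ ^ c) (Matrix.toLin' U)) := by
        rw [Finset.mul_sum, map_sum]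
    _ = ∑ c ∈ Finset.range m,
          (Module.finrank ℂ (Module.End.eigenspace (Matrix.toLin' U) (ζ ^ c)) : ℂ)
            * (ζ ^ c) ^ j := by
        refine Finset.sum_congr rfl fun c hc => ?_
        rw [hP c, map_smul, smul_eq_mul,
          (isProj_projP hm hU
            (by rw [← pow_mul, mul_comm, pow_mul, hζ.pow_eq_one, one_pow])).trace]
        ring

lemma sum_range_eq_sum_divisors {M : Type*} [AddCommMonoid M] {m : ℕ} (hm : 0 < m) (f : ℕ → M) :
    ∑ j ∈ Finset.range m, f j
      = ∑ d ∈ m.divisors, ∑ a ∈ (Finset.range (m / d)).filter (fun a => a.Coprime (m / d)),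
          f (d * a) := by
  rw [Finset.sum_sigma']
  refine (Finset.sum_bij' (i := fun (x : Σ _ : ℕ, ℕ) _ => x.1 * x.2)
    (j := fun j _ => ⟨j.gcd m, j / j.gcd m⟩) ?_ ?_ ?_ ?_ ?_).symm
  · rintro ⟨d, a⟩ hx
    rw [Finset.mem_sigma] at hx
    obtain ⟨hd, ha⟩ := hx
    rw [Finset.mem_filter, Finset.mem_range] at ha
    obtain ⟨hdm, -⟩ := Nat.mem_divisors.mp hd
    have hd0 : 0 < d := Nat.pos_of_mem_divisors hd
    rw [Finset.mem_range]
    calc d * a < d * (m / d) := (Nat.mul_lt_mul_left hd0).mpr ha.1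
      _ = m := Nat.mul_div_cancel' hdm
  · intro j hj
    rw [Finset.mem_range] at hj
    have hg0 : 0 < j.gcd m := Nat.gcd_pos_of_pos_right j hm
    rw [Finset.mem_sigma]
    constructor
    · exact Nat.mem_divisors.mpr ⟨Nat.gcd_dvd_right j m, hm.ne'⟩
    · rw [Finset.mem_filter, Finset.mem_range]
      exact ⟨Nat.div_lt_div_of_lt_of_dvd (Nat.gcd_dvd_right j m) hj,
        Nat.coprime_div_gcd_div_gcd hg0⟩
  · rintro ⟨d, a⟩ hx
    rw [Finset.mem_sigma] at hx
    obtain ⟨hd, ha⟩ := hx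
    rw [Finset.mem_filter, Finset.mem_range] at ha
    obtain ⟨hdm, -⟩ := Nat.mem_divisors.mp hd
    have hd0 : 0 < d := Nat.pos_of_mem_divisors hd
    have hgcd : (d * a).gcd m = d := by
      conv_lhs => rw [← Nat.mul_div_cancel' hdm]
      rw [Nat.gcd_mul_left, ha.2, mul_one]
    show (⟨(d * a).gcd m, d * a / (d * a).gcd m⟩ : Σ _ : ℕ, ℕ) = ⟨d, a⟩
    rw [hgcd, Nat.mul_div_cancel_left a hd0]
  · intro j hj
    exact Nat.mul_div_cancel' (Nat.gcd_dvd_left j m)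
  · intro x hx
    rfl

lemma aux_divisor (n : ℕ) (hn : 0 < n) {ξ : ℂ} (hξ : IsPrimitiveRoot ξ n)
    (q : Polynomial ℚ)
    (td : ↥(IntermediateField.adjoin ℚ ({ξ} : Set ℂ)))
    (htd : (td : ℂ) = Polynomial.aeval ξ q) :
    (algebraMap ℚ ℂ) (Algebra.trace ℚ (IntermediateField.adjoin ℚ ({ξ} : Set ℂ)) td)
      = ∑ a ∈ (Finset.range n).filter (fun a => a.Coprime n),
          Polynomial.aeval (ξ ^ a) q := by
  classical
  haveI : NeZero n := ⟨hn.ne'⟩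
  haveI : NeZero ((n : ℂ)) := ⟨Nat.cast_ne_zero.mpr hn.ne'⟩
  have hint : IsIntegral ℚ ξ := by
    refine ⟨Polynomial.X ^ n - 1, ?_, ?_⟩
    · exact Polynomial.monic_X_pow_sub_C 1 hn.ne'
    · simp [hξ.pow_eq_one]
  haveI : FiniteDimensional ℚ (IntermediateField.adjoin ℚ ({ξ} : Set ℂ)) :=
    IntermediateField.adjoin.finiteDimensional hint
  have hvalgen : ((IntermediateField.adjoin ℚ ({ξ} : Set ℂ)).val)
      (IntermediateField.AdjoinSimple.gen ℚ ξ) = ξ := rfl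
  have htd' : td = Polynomial.aeval (IntermediateField.AdjoinSimple.gen ℚ ξ) q := by
    have h2 : ((Polynomial.aeval (IntermediateField.AdjoinSimple.gen ℚ ξ) q :
        IntermediateField.adjoin ℚ ({ξ} : Set ℂ)) : ℂ) = Polynomial.aeval ξ q := by
      rw [show ((Polynomial.aeval (IntermediateField.AdjoinSimple.gen ℚ ξ) q :
          IntermediateField.adjoin ℚ ({ξ} : Set ℂ)) : ℂ)
        = (IntermediateField.adjoin ℚ ({ξ} : Set ℂ)).val
            (Polynomial.aeval (IntermediateField.AdjoinSimple.gen ℚ ξ) q) from rfl,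
        ← Polynomial.aeval_algHom_apply, hvalgen]
    exact Subtype.coe_injective (htd.trans h2.symm)
  have hminpoly : minpoly ℚ ξ = Polynomial.cyclotomic n ℚ :=
    (Polynomial.cyclotomic_eq_minpoly_rat hξ hn).symm
  -- every embedding sends `gen` to a primitive n-th root of unity
  have hgenroot : Polynomial.aeval (IntermediateField.AdjoinSimple.gen ℚ ξ) (minpoly ℚ ξ) = 0 :=
    IntermediateField.aeval_gen_minpoly ℚ ξ
  have hprim : ∀ σ : ↥(IntermediateField.adjoin ℚ ({ξ} : Set ℂ)) →ₐ[ℚ] ℂ, IsPrimitiveRoot (σ (IntermediateField.AdjoinSimple.gen ℚ ξ)) n := by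
    intro σ
    have h1 : Polynomial.aeval (σ (IntermediateField.AdjoinSimple.gen ℚ ξ)) (Polynomial.cyclotomic n ℚ) = 0 := by
      rw [Polynomial.aeval_algHom_apply, ← hminpoly, hgenroot, map_zero]
    have h2 : Polynomial.IsRoot (Polynomial.cyclotomic n ℂ) (σ (IntermediateField.AdjoinSimple.gen ℚ ξ)) := by
      rwa [Polynomial.IsRoot.def, ← Polynomial.map_cyclotomic n (algebraMap ℚ ℂ),
        ← Polynomial.eval₂_eq_eval_map, ← Polynomial.aeval_def]
    exact (Polynomial.isRoot_cyclotomic_iff).mp h2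
  have hmemroots : ∀ η : ℂ, IsPrimitiveRoot η n → η ∈ (minpoly ℚ ξ).aroots ℂ := by
    intro η hη
    rw [hminpoly, Polynomial.aroots_def, Polynomial.map_cyclotomic,
      Polynomial.cyclotomic.roots_eq_primitiveRoots_val, ← Finset.mem_def,
      mem_primitiveRoots hn]
    exact hη
  -- trace as sum over embeddings
  rw [trace_eq_sum_embeddings (E := ℂ)]
  have hσval : ∀ σ : ↥(IntermediateField.adjoin ℚ ({ξ} : Set ℂ)) →ₐ[ℚ] ℂ, σ td = Polynomial.aeval (σ (IntermediateField.AdjoinSimple.gen ℚ ξ)) q := by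
    intro σ
    rw [htd', ← Polynomial.aeval_algHom_apply]
  rw [Finset.sum_congr rfl fun σ _ => hσval σ]
  -- sum over embeddings = sum over primitive roots
  have step2 : ∑ σ : ↥(IntermediateField.adjoin ℚ ({ξ} : Set ℂ)) →ₐ[ℚ] ℂ, Polynomial.aeval (σ (IntermediateField.AdjoinSimple.gen ℚ ξ)) q
      = ∑ η ∈ primitiveRoots n ℂ, Polynomial.aeval η q := by
    refine Finset.sum_bij' (i := fun (σ : ↥(IntermediateField.adjoin ℚ ({ξ} : Set ℂ)) →ₐ[ℚ] ℂ) _ => σ (IntermediateField.AdjoinSimple.gen ℚ ξ))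
      (j := fun η hη => (IntermediateField.algHomAdjoinIntegralEquiv ℚ (K := ℂ) hint).symm ⟨η, hmemroots η
        ((mem_primitiveRoots hn).mp hη)⟩) ?_ ?_ ?_ ?_ ?_
    · intro σ _
      rw [mem_primitiveRoots hn]
      exact hprim σ
    · intro η hη
      exact Finset.mem_univ _
    · intro σ _
      have hval : (((IntermediateField.algHomAdjoinIntegralEquiv ℚ (K := ℂ) hint) σ :
          { x // x ∈ (minpoly ℚ ξ).aroots ℂ }) : ℂ)
          = σ (IntermediateField.AdjoinSimple.gen ℚ ξ) := by
        conv_rhs =>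
          rw [← (IntermediateField.algHomAdjoinIntegralEquiv ℚ (K := ℂ) hint).symm_apply_apply σ]
        exact (IntermediateField.algHomAdjoinIntegralEquiv_symm_apply_gen ℚ hint _).symm
      have hsub : (⟨σ (IntermediateField.AdjoinSimple.gen ℚ ξ),
          hmemroots (σ (IntermediateField.AdjoinSimple.gen ℚ ξ)) (hprim σ)⟩ :
          { x // x ∈ (minpoly ℚ ξ).aroots ℂ })
          = (IntermediateField.algHomAdjoinIntegralEquiv ℚ (K := ℂ) hint) σ :=
        Subtype.ext hval.symm
      show (IntermediateField.algHomAdjoinIntegralEquiv ℚ (K := ℂ) hint).symm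
          ⟨σ (IntermediateField.AdjoinSimple.gen ℚ ξ), _⟩ = σ
      rw [hsub]
      exact (IntermediateField.algHomAdjoinIntegralEquiv ℚ (K := ℂ) hint).symm_apply_apply σ
    · intro η hη
      exact IntermediateField.algHomAdjoinIntegralEquiv_symm_apply_gen ℚ hint _
    · intro σ _
      rfl
  rw [step2]
  -- sum over primitive roots = sum over coprime exponents
  have himg : ((Finset.range n).filter (fun a => a.Coprime n)).image (fun a => ξ ^ a)
      = primitiveRoots n ℂ := by
    ext η
    simp only [Finset.mem_image, Finset.mem_filter, Finset.mem_range, mem_primitiveRoots hn]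
    constructor
    · rintro ⟨a, ⟨-, hcop⟩, rfl⟩
      exact hξ.pow_of_coprime a hcop
    · intro hη
      obtain ⟨a, halt, rfl⟩ := hξ.eq_pow_of_pow_eq_one hη.pow_eq_one
      exact ⟨a, ⟨halt, (hξ.pow_iff_coprime hn a).mp hη⟩, rfl⟩
  rw [← himg, Finset.sum_image]
  intro a ha b hb hab
  rw [Finset.mem_coe, Finset.mem_filter, Finset.mem_range] at ha hb
  exact hξ.pow_inj ha.1 hb.1 hab

end Stmt17Aux

/-- Luthar–Passi multiplicity formula: if `U^m = I` and `α` is an `m`-th root of unity,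
then the multiplicity of `α` as an eigenvalue of `U` equals
`(1/m)·Σ_{d ∣ m} Tr_{ℚ(ζ_m^d)/ℚ}(tr(U^d)·α^{−d})`. Here the element
`tr(U^d)·α^{−d}` of `ℚ(ζ_m^d)` is represented by `t d`. -/
theorem stmt17 (m k : ℕ) (hm : 0 < m) (U : Matrix (Fin k) (Fin k) ℂ) (hU : U ^ m = 1)
    (α ζ : ℂ) (hα : α ^ m = 1) (hζ : IsPrimitiveRoot ζ m)
    (t : ∀ d : ℕ, ↥(IntermediateField.adjoin ℚ ({ζ ^ d} : Set ℂ)))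
    (ht : ∀ d : ℕ, ((t d : ℂ)) = (U ^ d).trace * (α⁻¹) ^ d) :
    (Module.finrank ℂ (Module.End.eigenspace (Matrix.toLin' U) α) : ℚ)
      = (1 / m) * ∑ d ∈ m.divisors,
          Algebra.trace ℚ (IntermediateField.adjoin ℚ ({ζ ^ d} : Set ℂ)) (t d) := by
  classical
  haveI : NeZero m := ⟨hm.ne'⟩
  obtain ⟨c₁, hc₁lt, hc₁⟩ := hζ.eq_pow_of_pow_eq_one (ξ := α⁻¹)
    (by rw [inv_pow, hα, inv_one])
  set r : ℕ → ℕ :=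
    fun c => Module.finrank ℂ (Module.End.eigenspace (Matrix.toLin' U) (ζ ^ c)) with hr
  have hW : ∀ j : ℕ, ((U ^ j).trace) * (α⁻¹) ^ j
      = ∑ c ∈ Finset.range m, (r c : ℂ) * ζ ^ ((c + c₁) * j) := by
    intro j
    rw [Stmt17Aux.trace_pow hm hU hζ j, Finset.sum_mul]
    refine Finset.sum_congr rfl fun c _ => ?_
    rw [mul_assoc, ← hc₁, ← pow_mul, ← pow_mul, ← pow_add, ← add_mul]
  have hdiv : ∀ d ∈ m.divisors,
      (algebraMap ℚ ℂ) (Algebra.trace ℚ (IntermediateField.adjoin ℚ ({ζ ^ d} : Set ℂ)) (t d))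
        = ∑ a ∈ (Finset.range (m / d)).filter (fun a => a.Coprime (m / d)),
            ∑ c ∈ Finset.range m, (r c : ℂ) * ζ ^ ((c + c₁) * (d * a)) := by
    intro d hd
    obtain ⟨hdm, -⟩ := Nat.mem_divisors.mp hd
    have hd0 : 0 < d := Nat.pos_of_mem_divisors hd
    have hn : 0 < m / d := Nat.div_pos (Nat.le_of_dvd hm hdm) hd0
    have hξ : IsPrimitiveRoot (ζ ^ d) (m / d) := hζ.pow hm (Nat.mul_div_cancel' hdm).symm
    set q : Polynomial ℚ :=
      ∑ c ∈ Finset.range m, Polynomial.C ((r c : ℚ)) * Polynomial.X ^ (c + c₁) with hq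
    have haeval : ∀ y : ℂ,
        Polynomial.aeval y q = ∑ c ∈ Finset.range m, (r c : ℂ) * y ^ (c + c₁) := by
      intro y
      rw [hq, map_sum]
      refine Finset.sum_congr rfl fun c _ => ?_
      rw [map_mul, Polynomial.aeval_C, map_pow, Polynomial.aeval_X]
      norm_num
    have htd : ((t d : ℂ)) = Polynomial.aeval (ζ ^ d) q := by
      rw [ht d, hW d, haeval]
      refine Finset.sum_congr rfl fun c _ => ?_
      rw [← pow_mul, mul_comm d (c + c₁)]
    rw [Stmt17Aux.aux_divisor (m / d) hn hξ q (t d) htd]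
    refine Finset.sum_congr rfl fun a ha => ?_
    rw [haeval]
    refine Finset.sum_congr rfl fun c _ => ?_
    rw [← pow_mul, ← pow_mul]
    congr 1
    ring
  have main : ((Module.finrank ℂ (Module.End.eigenspace (Matrix.toLin' U) α)) : ℂ)
      = (m : ℂ)⁻¹ * ∑ d ∈ m.divisors,
          (algebraMap ℚ ℂ)
            (Algebra.trace ℚ (IntermediateField.adjoin ℚ ({ζ ^ d} : Set ℂ)) (t d)) := by
    rw [Stmt17Aux.finrank_eigenspace hm hU hα]
    congr 1
    calc ∑ j ∈ Finset.range m, (α⁻¹) ^ j * (U ^ j).trace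
        = ∑ j ∈ Finset.range m, ∑ c ∈ Finset.range m, (r c : ℂ) * ζ ^ ((c + c₁) * j) := by
          refine Finset.sum_congr rfl fun j _ => ?_
          rw [mul_comm, hW j]
      _ = ∑ d ∈ m.divisors, ∑ a ∈ (Finset.range (m / d)).filter (fun a => a.Coprime (m / d)),
            ∑ c ∈ Finset.range m, (r c : ℂ) * ζ ^ ((c + c₁) * (d * a)) :=
          Stmt17Aux.sum_range_eq_sum_divisors hm _
      _ = ∑ d ∈ m.divisors,
            (algebraMap ℚ ℂ)
              (Algebra.trace ℚ (IntermediateField.adjoin ℚ ({ζ ^ d} : Set ℂ)) (t d)) :=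
          Finset.sum_congr rfl fun d hd => (hdiv d hd).symm
  have hcast : ∀ x : ℚ, (algebraMap ℚ ℂ) x = (x : ℂ) := fun x => eq_ratCast (algebraMap ℚ ℂ) x
  simp only [hcast] at main
  have hinj : Function.Injective ((↑) : ℚ → ℂ) := Rat.cast_injective
  apply hinj
  push_cast
  rw [main, one_div]
end

section
/- Let G be a finite group, N ⊴ G with k = [G : N], and ρ_N : RG → M_k(RN) the matrix representation of left multiplication on RG viewed as a free right RN-module with basis a transversal of N in G. Then for every r ∈ RG and x ∈ N: ε_x^N(tr(ρ_N(r))) = [C_G(x) : C_N(x)]·ε_x^G(r). -/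
open scoped Classical

open Finset

theorem fiber_card {G : Type*} [Group G] [Fintype G]
    (N : Subgroup G) [N.Normal] (sec : G ⧸ N → G)
    (hsec : ∀ q : G ⧸ N, (QuotientGroup.mk (sec q) : G ⧸ N) = q)
    (x : G) (hx : x ∈ N) (h : G) (g₀ : G) (hg₀ : g₀ * x * g₀⁻¹ = h) :
    (Finset.univ.filter (fun p : ↥N × (G ⧸ N) =>
        sec p.2 * (p.1 : G) * (sec p.2)⁻¹ = h ∧ IsConj (⟨x, hx⟩ : ↥N) p.1)).card
      = N.relIndex (Subgroup.centralizer {x}) := by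
  classical
  set C := Subgroup.centralizer {x} with hCdef
  have hCmem : ∀ c : G, c ∈ C ↔ x * c = c * x := by
    intro c
    simp [hCdef, Subgroup.mem_centralizer_iff]
  have hN : h ∈ N := by
    rw [← hg₀]; exact Subgroup.Normal.conj_mem ‹N.Normal› x hx g₀
  have hg₀' : g₀⁻¹ * h * g₀ = x := by rw [← hg₀]; group
  -- membership of conjugates of h in N
  have hconjN : ∀ q : G ⧸ N, (sec q)⁻¹ * h * sec q ∈ N := by
    intro q
    have := Subgroup.Normal.conj_mem ‹N.Normal› h hN (sec q)⁻¹
    simpa using this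
  -- the map from the centralizer to the pairs
  let pair : ↥C → ↥N × (G ⧸ N) := fun c =>
    (⟨(sec (QuotientGroup.mk (g₀ * (c : G))))⁻¹ * h *
        sec (QuotientGroup.mk (g₀ * (c : G))), hconjN _⟩,
      QuotientGroup.mk (g₀ * (c : G)))
  have pair_conj : ∀ c : ↥C, (g₀ * (c : G)) * x * (g₀ * (c : G))⁻¹ = h := by
    intro c
    have hc : x * (c : G) = (c : G) * x := (hCmem c).mp c.2
    have : (c : G) * x * (c : G)⁻¹ = x := by
      rw [← hc]; group
    calc (g₀ * (c : G)) * x * (g₀ * (c : G))⁻¹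
        = g₀ * ((c : G) * x * (c : G)⁻¹) * g₀⁻¹ := by group
      _ = g₀ * x * g₀⁻¹ := by rw [this]
      _ = h := hg₀
  have pair_resp : ∀ c c' : ↥C, (QuotientGroup.mk c : ↥C ⧸ N.subgroupOf C)
      = QuotientGroup.mk c' → pair c = pair c' := by
    intro c c' hcc
    have hmem : (c : G)⁻¹ * (c' : G) ∈ N := by
      have := (QuotientGroup.eq (s := N.subgroupOf C)).mp hcc
      simpa [Subgroup.mem_subgroupOf] using this
    have hq : (QuotientGroup.mk (g₀ * (c : G)) : G ⧸ N)
        = QuotientGroup.mk (g₀ * (c' : G)) := by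
      rw [QuotientGroup.eq]
      simpa [mul_assoc] using hmem
    simp only [pair, hq]
  have pair_mem : ∀ c : ↥C, pair c ∈ Finset.univ.filter (fun p : ↥N × (G ⧸ N) =>
      sec p.2 * (p.1 : G) * (sec p.2)⁻¹ = h ∧ IsConj (⟨x, hx⟩ : ↥N) p.1) := by
    intro c
    rw [Finset.mem_filter]
    refine ⟨Finset.mem_univ _, ?_, ?_⟩
    · simp only [pair]; group
    · set q := (QuotientGroup.mk (g₀ * (c : G)) : G ⧸ N) with hq
      have hm : (sec q)⁻¹ * (g₀ * (c : G)) ∈ N := by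
        rw [← QuotientGroup.eq, hsec]
      refine (isConj_iff).mpr ⟨⟨(sec q)⁻¹ * (g₀ * (c : G)), hm⟩, ?_⟩
      apply Subtype.ext
      simp only [pair, Subgroup.coe_mul, InvMemClass.coe_inv]
      rw [← pair_conj c]
      rw [← hq]
      group
  have hrel : N.relIndex C = (Finset.univ : Finset (↥C ⧸ N.subgroupOf C)).card := by
    rw [Finset.card_univ, ← Nat.card_eq_fintype_card]
    rfl
  rw [hrel]
  symm
  refine Finset.card_bij (fun cq _ => Quotient.liftOn' cq pair ?_) ?_ ?_ ?_
  · intro c c' hcc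
    exact pair_resp c c' (Quotient.sound' hcc)
  · intro cq _
    obtain ⟨c, rfl⟩ := QuotientGroup.mk_surjective cq
    exact pair_mem c
  · intro cq _ cq' _ heq
    obtain ⟨c, rfl⟩ := QuotientGroup.mk_surjective cq
    obtain ⟨c', rfl⟩ := QuotientGroup.mk_surjective cq'
    simp only [Quotient.liftOn'_mk''] at heq
    have hq : (QuotientGroup.mk (g₀ * (c : G)) : G ⧸ N)
        = QuotientGroup.mk (g₀ * (c' : G)) := congrArg Prod.snd heq
    have hmem : (g₀ * (c : G))⁻¹ * (g₀ * (c' : G)) ∈ N := QuotientGroup.eq.mp hq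
    have hmem' : (c : G)⁻¹ * (c' : G) ∈ N := by
      simpa [mul_assoc] using hmem
    apply Quotient.sound'
    rw [QuotientGroup.leftRel_apply]
    simpa [Subgroup.mem_subgroupOf] using hmem'
  · rintro ⟨n, q⟩ hb
    rw [Finset.mem_filter] at hb
    obtain ⟨-, hφ, hconj⟩ := hb
    obtain ⟨m, hm⟩ := isConj_iff.mp hconj
    have hmx : (m : G) * x * (m : G)⁻¹ = (n : G) := by
      have := congrArg (Subtype.val) hm
      simpa using this
    set g : G := sec q * (m : G) with hg
    have hgx : g * x * g⁻¹ = h := by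
      calc g * x * g⁻¹ = sec q * ((m : G) * x * (m : G)⁻¹) * (sec q)⁻¹ := by
            rw [hg]; group
        _ = sec q * (n : G) * (sec q)⁻¹ := by rw [hmx]
        _ = h := hφ
    have hcC : g₀⁻¹ * g ∈ C := by
      rw [hCmem]
      have : (g₀⁻¹ * g) * x * (g₀⁻¹ * g)⁻¹ = x := by
        calc (g₀⁻¹ * g) * x * (g₀⁻¹ * g)⁻¹ = g₀⁻¹ * (g * x * g⁻¹) * g₀ := by group
          _ = g₀⁻¹ * h * g₀ := by rw [hgx]
          _ = x := hg₀'
      calc x * (g₀⁻¹ * g) = ((g₀⁻¹ * g) * x * (g₀⁻¹ * g)⁻¹) * (g₀⁻¹ * g) := by rw [this]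
        _ = (g₀⁻¹ * g) * x := by group
    refine ⟨QuotientGroup.mk (⟨g₀⁻¹ * g, hcC⟩ : ↥C), Finset.mem_univ _, ?_⟩
    simp only [Quotient.liftOn'_mk'']
    have hgq : (QuotientGroup.mk (g₀ * (g₀⁻¹ * g)) : G ⧸ N) = q := by
      have h1 : g₀ * (g₀⁻¹ * g) = g := by group
      rw [h1, hg, QuotientGroup.mk_mul_of_mem (sec q) m.2, hsec]
    have : pair ⟨g₀⁻¹ * g, hcC⟩ = (n, q) := by
      simp only [pair]
      refine Prod.ext ?_ ?_
      · apply Subtype.ext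
        simp only [hgq]
        have : (sec q)⁻¹ * h * sec q = (n : G) := by
          rw [← hφ]; group
        simpa using this
      · simpa using hgq
    exact this

/-- Let `N ⊴ G` with transversal given by a section `sec : G/N → G`, and let
`ρ_N : RG → M_k(RN)` be the matrix representation of left multiplication on `RG` viewed as
a free right `RN`-module on the transversal (its `(q,q')` entry has coefficient
`r(sec q · n · (sec q')⁻¹)` at `n ∈ N`). Then for `r ∈ RG` and `x ∈ N`:
`ε_x^N(tr(ρ_N(r))) = [C_G(x) : C_N(x)]·ε_x^G(r)`. -/
theorem stmt18 {R : Type*} [CommRing R] {G : Type*} [Group G] [Fintype G]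
    (N : Subgroup G) [N.Normal] (sec : G ⧸ N → G)
    (hsec : ∀ q : G ⧸ N, (QuotientGroup.mk (sec q) : G ⧸ N) = q)
    (r : MonoidAlgebra R G) (x : G) (hx : x ∈ N) :
    (∑ n : ↥N, if IsConj (⟨x, hx⟩ : ↥N) n
        then ∑ q : G ⧸ N, r.coeff (sec q * (n : G) * (sec q)⁻¹) else 0)
      = (N.relIndex (Subgroup.centralizer {x}) : R) *
          ∑ h : G, if IsConj x h then r.coeff h else 0 := by
  classical
  have step1 : (∑ n : ↥N, if IsConj (⟨x, hx⟩ : ↥N) n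
        then ∑ q : G ⧸ N, r.coeff (sec q * (n : G) * (sec q)⁻¹) else 0)
      = ∑ p : ↥N × (G ⧸ N), (if IsConj (⟨x, hx⟩ : ↥N) p.1
          then r.coeff (sec p.2 * (p.1 : G) * (sec p.2)⁻¹) else 0) := by
    rw [Fintype.sum_prod_type]
    refine Finset.sum_congr rfl fun n _ => ?_
    split_ifs with hc
    · rfl
    · exact Finset.sum_const_zero.symm
  rw [step1]
  have step2 : ∑ p : ↥N × (G ⧸ N), (if IsConj (⟨x, hx⟩ : ↥N) p.1
          then r.coeff (sec p.2 * (p.1 : G) * (sec p.2)⁻¹) else 0)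
      = ∑ h : G, ∑ p ∈ Finset.univ.filter
          (fun p : ↥N × (G ⧸ N) => sec p.2 * (p.1 : G) * (sec p.2)⁻¹ = h),
          (if IsConj (⟨x, hx⟩ : ↥N) p.1
            then r.coeff (sec p.2 * (p.1 : G) * (sec p.2)⁻¹) else 0) :=
    (Finset.sum_fiberwise_of_maps_to (fun p _ => Finset.mem_univ _) _).symm
  rw [step2]
  have step3 : ∀ h : G, (∑ p ∈ Finset.univ.filter
          (fun p : ↥N × (G ⧸ N) => sec p.2 * (p.1 : G) * (sec p.2)⁻¹ = h),
          (if IsConj (⟨x, hx⟩ : ↥N) p.1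
            then r.coeff (sec p.2 * (p.1 : G) * (sec p.2)⁻¹) else 0))
      = (if IsConj x h then (N.relIndex (Subgroup.centralizer {x}) : R) * r.coeff h else 0) := by
    intro h
    by_cases hconj : IsConj x h
    · rw [if_pos hconj]
      obtain ⟨g₀, hg₀⟩ := isConj_iff.mp hconj
      have e1 : (∑ p ∈ Finset.univ.filter
          (fun p : ↥N × (G ⧸ N) => sec p.2 * (p.1 : G) * (sec p.2)⁻¹ = h),
          (if IsConj (⟨x, hx⟩ : ↥N) p.1
            then r.coeff (sec p.2 * (p.1 : G) * (sec p.2)⁻¹) else 0))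
          = ∑ p ∈ Finset.univ.filter
          (fun p : ↥N × (G ⧸ N) => sec p.2 * (p.1 : G) * (sec p.2)⁻¹ = h),
          (if IsConj (⟨x, hx⟩ : ↥N) p.1 then r.coeff h else 0) := by
        refine Finset.sum_congr rfl fun p hp => ?_
        rw [(Finset.mem_filter.mp hp).2]
      rw [e1, ← Finset.sum_filter, Finset.filter_filter, Finset.sum_const,
        fiber_card N sec hsec x hx h g₀ hg₀, nsmul_eq_mul]
    · rw [if_neg hconj]
      refine Finset.sum_eq_zero fun p hp => ?_
      rw [if_neg]
      intro hc
      apply hconj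
      obtain ⟨m, hm⟩ := isConj_iff.mp hc
      have hmx : (m : G) * x * (m : G)⁻¹ = (p.1 : G) := by
        have := congrArg (Subtype.val) hm
        simpa using this
      have hφ := (Finset.mem_filter.mp hp).2
      refine isConj_iff.mpr ⟨sec p.2 * (m : G), ?_⟩
      calc sec p.2 * (m : G) * x * (sec p.2 * (m : G))⁻¹
          = sec p.2 * ((m : G) * x * (m : G)⁻¹) * (sec p.2)⁻¹ := by group
        _ = sec p.2 * (p.1 : G) * (sec p.2)⁻¹ := by rw [hmx]
        _ = h := hφ
  rw [Finset.sum_congr rfl fun h _ => step3 h, Finset.mul_sum]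
  refine Finset.sum_congr rfl fun h _ => ?_
  split_ifs with hc
  · rfl
  · rw [mul_zero]
end
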